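/- arXiv:1910.13885 — 5 statements merged into one kernel-verified Lean document; each statement's English description precedes it below -/
import Mathlib

section
/- Let κ₁ > 0 and κ₂ > 0, and let a ≥ 0, b ≥ 0 satisfy a + b < 1. Let x : [0,∞) → ℝ be a function that is bounded on the initial interval [0, κ₁ + κ₂] and satisfies the difference equation x(t) = a·x(t − κ₂) + b·x(t − κ₁ − κ₂) for all t ≥ κ₁ + κ₂. Then x converges to zero exponentially: there exist constants C ≥ 0 and μ > 0, with μ depending only on a, b, κ₁, κ₂, such that |x(t)| ≤ C·e^{−μ t}·sup_{s ∈ [0, κ₁+κ₂]} |x(s)| for all t ≥ 0. -/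
/-- Exponential stability of the scalar difference equation
`x(t) = a x(t − κ₂) + b x(t − κ₁ − κ₂)` with nonnegative coefficients satisfying `a + b < 1`:
there are constants `C ≥ 0` and `μ > 0` (depending only on `a, b, κ₁, κ₂`) such that every
solution bounded on the initial interval `[0, κ₁ + κ₂]` satisfies
`|x(t)| ≤ C e^{−μ t} sup_{s ∈ [0,κ₁+κ₂]} |x(s)|` for all `t ≥ 0`. -/
theorem difference_equation_exponential_decay (κ₁ κ₂ a b : ℝ)
    (hκ₁ : 0 < κ₁) (hκ₂ : 0 < κ₂) (ha : 0 ≤ a) (hb : 0 ≤ b) (hab : a + b < 1) :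
    ∃ C : ℝ, 0 ≤ C ∧ ∃ μ : ℝ, 0 < μ ∧
      ∀ x : ℝ → ℝ,
        BddAbove ((fun s => |x s|) '' Set.Icc 0 (κ₁ + κ₂)) →
        (∀ t : ℝ, κ₁ + κ₂ ≤ t → x t = a * x (t - κ₂) + b * x (t - κ₁ - κ₂)) →
        ∀ t : ℝ, 0 ≤ t →
          |x t| ≤ C * Real.exp (-μ * t) *
            sSup ((fun s => |x s|) '' Set.Icc 0 (κ₁ + κ₂)) := by
  have hT0 : 0 < κ₁ + κ₂ := by linarith
  set r' : ℝ := max (a + b) (1/2) with hr'def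
  have hr'0 : (0:ℝ) < r' := lt_of_lt_of_le (by norm_num) (le_max_right _ _)
  have hr'1 : r' < 1 := max_lt hab (by norm_num)
  have hrr' : a + b ≤ r' := le_max_left _ _
  set μ := -Real.log r' / (κ₁ + κ₂) with hμdef
  have hμ : 0 < μ := div_pos (neg_pos.2 (Real.log_neg hr'0 hr'1)) hT0
  have hμT : μ * (κ₁ + κ₂) = -Real.log r' := by
    rw [hμdef]; field_simp [hT0.ne']
  refine ⟨Real.exp (μ * (κ₁ + κ₂)), (Real.exp_pos _).le, μ, hμ, ?_⟩
  intro x hbdd heq t ht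
  set M := sSup ((fun s => |x s|) '' Set.Icc 0 (κ₁ + κ₂)) with hMdef
  have hmem : ∀ s : ℝ, 0 ≤ s → s ≤ κ₁ + κ₂ → |x s| ≤ M := fun s h1 h2 =>
    le_csSup hbdd ⟨s, ⟨h1, h2⟩, rfl⟩
  have hM0 : 0 ≤ M := le_trans (abs_nonneg _) (hmem 0 le_rfl hT0.le)
  -- Step 1: boundedness by M on [0, κ₁+κ₂+m·κ₂]
  have hbound : ∀ m : ℕ, ∀ s : ℝ, 0 ≤ s → s ≤ κ₁ + κ₂ + m * κ₂ → |x s| ≤ M := by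
    intro m
    induction m with
    | zero => intro s h1 h2; exact hmem s h1 (by push_cast at h2; linarith)
    | succ m ih =>
      intro s h1 h2
      by_cases hc : s ≤ κ₁ + κ₂ + m * κ₂
      · exact ih s h1 hc
      push_neg at hc
      have hmnn : (0:ℝ) ≤ (m:ℝ) := Nat.cast_nonneg m
      have hsT : κ₁ + κ₂ ≤ s := by nlinarith
      rw [heq s hsT]
      have h1' : |x (s - κ₂)| ≤ M := ih _ (by linarith) (by push_cast at h2; linarith)
      have h2' : |x (s - κ₁ - κ₂)| ≤ M := ih _ (by linarith) (by push_cast at h2; nlinarith)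
      calc |a * x (s - κ₂) + b * x (s - κ₁ - κ₂)|
          ≤ |a * x (s - κ₂)| + |b * x (s - κ₁ - κ₂)| := abs_add_le _ _
        _ = a * |x (s - κ₂)| + b * |x (s - κ₁ - κ₂)| := by
            rw [abs_mul, abs_mul, abs_of_nonneg ha, abs_of_nonneg hb]
        _ ≤ a * M + b * M := by
            gcongr
        _ ≤ M := by nlinarith
  have hball : ∀ s : ℝ, 0 ≤ s → |x s| ≤ M := by
    intro s hs
    obtain ⟨m, hm⟩ := exists_nat_ge (s / κ₂)
    have : s ≤ m * κ₂ := by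
      rw [div_le_iff₀ hκ₂] at hm; linarith
    exact hbound m s hs (by linarith)
  -- Step 2: geometric decay
  have hdecay : ∀ n : ℕ, ∀ s : ℝ, (n : ℝ) * (κ₁ + κ₂) ≤ s → |x s| ≤ r' ^ n * M := by
    intro n
    induction n with
    | zero => intro s hs; simpa using hball s (by simpa using hs)
    | succ n ih =>
      intro s hs
      push_cast at hs
      have hn : (0:ℝ) ≤ (n:ℝ) := Nat.cast_nonneg n
      have hsT : κ₁ + κ₂ ≤ s := by nlinarith
      rw [heq s hsT]
      have h1' : |x (s - κ₂)| ≤ r' ^ n * M := ih _ (by nlinarith)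
      have h2' : |x (s - κ₁ - κ₂)| ≤ r' ^ n * M := ih _ (by nlinarith)
      have hpM : 0 ≤ r' ^ n * M := mul_nonneg (pow_nonneg hr'0.le n) hM0
      calc |a * x (s - κ₂) + b * x (s - κ₁ - κ₂)|
          ≤ |a * x (s - κ₂)| + |b * x (s - κ₁ - κ₂)| := abs_add_le _ _
        _ = a * |x (s - κ₂)| + b * |x (s - κ₁ - κ₂)| := by
            rw [abs_mul, abs_mul, abs_of_nonneg ha, abs_of_nonneg hb]
        _ ≤ a * (r' ^ n * M) + b * (r' ^ n * M) := by gcongr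
        _ = (a + b) * (r' ^ n * M) := by ring
        _ ≤ r' * (r' ^ n * M) := by gcongr
        _ = r' ^ (n + 1) * M := by ring
  -- Conclusion
  set n := Nat.floor (t / (κ₁ + κ₂)) with hndef
  have hn1 : (n : ℝ) ≤ t / (κ₁ + κ₂) := Nat.floor_le (by positivity)
  have hn2 : t / (κ₁ + κ₂) < n + 1 := Nat.lt_floor_add_one _
  have hnt : (n : ℝ) * (κ₁ + κ₂) ≤ t := by
    rw [← le_div_iff₀ hT0]; exact hn1
  have hnt' : t < ((n : ℝ) + 1) * (κ₁ + κ₂) := by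
    rw [← div_lt_iff₀ hT0]; exact hn2
  have key : |x t| ≤ r' ^ n * M := hdecay n t hnt
  have hexp : r' ^ n = Real.exp (-μ * ((n:ℝ) * (κ₁ + κ₂))) := by
    rw [← Real.exp_log hr'0, ← Real.exp_nat_mul]
    congr 1
    have : Real.log r' = -(μ * (κ₁ + κ₂)) := by rw [hμT]; ring
    rw [this]; ring
  have hmono : Real.exp (-μ * ((n:ℝ) * (κ₁ + κ₂))) ≤
      Real.exp (μ * (κ₁ + κ₂)) * Real.exp (-μ * t) := by
    rw [← Real.exp_add]
    apply Real.exp_le_exp.2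
    nlinarith [hμ.le]
  calc |x t| ≤ r' ^ n * M := key
    _ = Real.exp (-μ * ((n:ℝ) * (κ₁ + κ₂))) * M := by rw [hexp]
    _ ≤ Real.exp (μ * (κ₁ + κ₂)) * Real.exp (-μ * t) * M := by gcongr
end

section
/- Let L > 0, transport speeds v₁⋆, v₂⋆, λ₁, λ₂ > 0, constants 0 < r₂ ≤ r₁ < 1, τ₁, τ₂ > 0, and set E_i = exp(−L/(τ_i v_i⋆)) and κ_i = L/v_i⋆ + L/λ_i for i = 1,2. Suppose α₁, β₁ : [0,L] × [0,∞) → ℝ and α₂, β₂ : [−L,0] × [0,∞) → ℝ are continuously differentiable and satisfy the target system: ∂_t α_i + v_i⋆ ∂_x α_i = 0 and ∂_t β_i − λ_i ∂_x β_i = 0 (i = 1,2), with boundary conditions β₁(L,t) = r₁ E₁ α₁(L,t), α₁(0,t) = α₂(0,t), α₂(−L,t) = (E₂/r₂) β₂(−L,t), and β₂(0,t) = (r₂/r₁) β₁(0,t) + ((r₁−r₂)/(1−r₁)) α₂(0,t). Then for all t ≥ κ₁ + κ₂, the boundary trace satisfies the difference equation β₂(0,t) = E₂·((r₁−r₂)/((1−r₁)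 r₂))·β₂(0, t−κ₂) + E₁ E₂·β₂(0, t−κ₁−κ₂). -/
open Set Filter Topology

/-- Core constancy along characteristics for a transport equation on a strip. -/
lemma transport_core (u : ℝ → ℝ → ℝ) (a b c p t T : ℝ)
    (hT : 0 < T)
    (hC1 : ContDiffOn ℝ 1 (fun z : ℝ × ℝ => u z.1 z.2) (Set.Icc a b ×ˢ Set.Ici 0))
    (hpde : ∀ x ∈ Set.Icc a b, ∀ s ∈ Set.Ici (0:ℝ),
      deriv (fun s' => u x s') s + c * deriv (fun y => u y s) x = 0)
    (hmem : ∀ s ∈ Set.Icc (0:ℝ) T, p + c * s ∈ Set.Icc a b ∧ 0 ≤ t - T + s)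
    (hint : ∀ s ∈ Set.Ioo (0:ℝ) T, p + c * s ∈ Set.Ioo a b ∧ 0 < t - T + s) :
    u (p + c * T) t = u p (t - T) := by
  set U : ℝ × ℝ → ℝ := fun z => u z.1 z.2 with hU
  set γ : ℝ → ℝ × ℝ := fun s => (p + c * s, t - T + s) with hγ
  set g : ℝ → ℝ := fun s => U (γ s) with hg
  have hγcont : Continuous γ := by fun_prop
  have hmaps : Set.MapsTo γ (Set.Icc 0 T) (Set.Icc a b ×ˢ Set.Ici 0) := by
    intro s hs
    exact Set.mk_mem_prod (hmem s hs).1 (hmem s hs).2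
  have hgcont : ContinuousOn g (Set.Icc 0 T) :=
    hC1.continuousOn.comp hγcont.continuousOn hmaps
  have hderiv : ∀ s ∈ Set.Ioo (0:ℝ) T, HasDerivAt g 0 s := by
    intro s hs
    obtain ⟨hx, ht⟩ := hint s hs
    have hzint : γ s ∈ interior (Set.Icc a b ×ˢ Set.Ici 0) := by
      rw [interior_prod_eq, interior_Icc, interior_Ici]
      exact Set.mk_mem_prod hx ht
    have hUdiff : DifferentiableAt ℝ U (γ s) :=
      (hC1.differentiableOn one_ne_zero).differentiableAt
        (mem_interior_iff_mem_nhds.mp hzint)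
    set D := fderiv ℝ U (γ s) with hD
    have hUd : HasFDerivAt U D (γ s) := hUdiff.hasFDerivAt
    have hdt : HasDerivAt (fun s' => u (p + c * s) s') (D (0, 1)) (t - T + s) := by
      have h1 : HasDerivAt (fun s' : ℝ => ((p + c * s : ℝ), s')) ((0 : ℝ), (1 : ℝ))
          (t - T + s) := HasDerivAt.prodMk (hasDerivAt_const _ _) (hasDerivAt_id _)
      have := hUd.comp_hasDerivAt (t - T + s) h1
      exact this
    have hdx : HasDerivAt (fun y => u y (t - T + s)) (D (1, 0)) (p + c * s) := by
      have h1 : HasDerivAt (fun y : ℝ => (y, (t - T + s : ℝ))) ((1 : ℝ), (0 : ℝ))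
          (p + c * s) := HasDerivAt.prodMk (hasDerivAt_id _) (hasDerivAt_const _ _)
      have := hUd.comp_hasDerivAt (p + c * s) h1
      exact this
    have hpd := hpde (p + c * s) (Set.mem_Icc.mpr ⟨hx.1.le, hx.2.le⟩) (t - T + s) ht.le
    rw [hdt.deriv, hdx.deriv] at hpd
    have hγd : HasDerivAt γ (c, 1) s := by
      have h1 : HasDerivAt (fun s : ℝ => p + c * s) c s := by
        simpa using ((hasDerivAt_id s).const_mul c).const_add p
      have h2 : HasDerivAt (fun s : ℝ => t - T + s) 1 s := by
        simpa using (hasDerivAt_id s).const_add (t - T)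
      exact HasDerivAt.prodMk h1 h2
    have hgc : HasDerivAt g (D (c, 1)) s := hUd.comp_hasDerivAt s hγd
    have hval : D (c, 1) = 0 := by
      have h3 : ((c : ℝ), (1 : ℝ)) = c • ((1 : ℝ), (0 : ℝ)) + ((0 : ℝ), (1 : ℝ)) := by
        simp
      rw [h3, D.map_add, D.map_smul]
      simp only [smul_eq_mul]
      linarith
    rwa [hval] at hgc
  have key : ∀ ε ∈ Set.Ioc (0:ℝ) T, g T = g ε := by
    intro ε hε
    have := constant_of_has_deriv_right_zero (f := g) (a := ε) (b := T)
      (hgcont.mono (Set.Icc_subset_Icc hε.1.le le_rfl))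
      (fun x hx => (hderiv x ⟨lt_of_lt_of_le hε.1 hx.1, hx.2⟩).hasDerivWithinAt)
      T (Set.right_mem_Icc.mpr hε.2)
    exact this
  have hne : (𝓝[Set.Ioc 0 T] (0:ℝ)).NeBot := by
    apply mem_closure_iff_nhdsWithin_neBot.mp
    rw [closure_Ioc hT.ne]
    exact Set.left_mem_Icc.mpr hT.le
  have h1 : Tendsto g (𝓝[Set.Ioc 0 T] 0) (𝓝 (g 0)) :=
    (hgcont 0 (Set.left_mem_Icc.mpr hT.le)).mono Set.Ioc_subset_Icc_self
  have h2 : Tendsto g (𝓝[Set.Ioc 0 T] 0) (𝓝 (g T)) := by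
    apply Filter.Tendsto.congr' _ (tendsto_const_nhds (α := ℝ) (x := g T))
    filter_upwards [self_mem_nhdsWithin] with s hs
    exact key s hs
  have h0T : g 0 = g T := tendsto_nhds_unique h1 h2
  have e1 : g T = u (p + c * T) t := by
    simp only [hg, hγ, hU]
    norm_num
  have e0 : g 0 = u p (t - T) := by
    simp only [hg, hγ, hU]
    norm_num
  rw [← e1, ← h0T, e0]

/-- Rightward transport: `u(b,t) = u(a, t - (b-a)/v)`. -/
lemma transport_right (u : ℝ → ℝ → ℝ) (a b v : ℝ) (hab : a < b) (hv : 0 < v)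
    (hC1 : ContDiffOn ℝ 1 (fun z : ℝ × ℝ => u z.1 z.2) (Set.Icc a b ×ˢ Set.Ici 0))
    (hpde : ∀ x ∈ Set.Icc a b, ∀ s ∈ Set.Ici (0:ℝ),
      deriv (fun s' => u x s') s + v * deriv (fun y => u y s) x = 0)
    (t : ℝ) (ht : (b - a) / v ≤ t) :
    u b t = u a (t - (b - a) / v) := by
  set T := (b - a) / v with hTdef
  have hT : 0 < T := div_pos (by linarith) hv
  have hb : a + v * T = b := by rw [hTdef, mul_comm, div_mul_cancel₀ _ hv.ne']; ring
  have := transport_core u a b v a t T hT hC1 hpde ?_ ?_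
  · rwa [hb] at this
  · intro s hs
    constructor
    · constructor
      · nlinarith [hs.1, hv.le]
      · nlinarith [hs.2, hv.le]
    · linarith [hs.1]
  · intro s hs
    constructor
    · constructor
      · nlinarith [hs.1, hv]
      · nlinarith [hs.2, hv]
    · linarith [hs.1]

/-- Leftward transport: `u(a,t) = u(b, t - (b-a)/lam)`. -/
lemma transport_left (u : ℝ → ℝ → ℝ) (a b lam : ℝ) (hab : a < b) (hlam : 0 < lam)
    (hC1 : ContDiffOn ℝ 1 (fun z : ℝ × ℝ => u z.1 z.2) (Set.Icc a b ×ˢ Set.Ici 0))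
    (hpde : ∀ x ∈ Set.Icc a b, ∀ s ∈ Set.Ici (0:ℝ),
      deriv (fun s' => u x s') s - lam * deriv (fun y => u y s) x = 0)
    (t : ℝ) (ht : (b - a) / lam ≤ t) :
    u a t = u b (t - (b - a) / lam) := by
  set T := (b - a) / lam with hTdef
  have hT : 0 < T := div_pos (by linarith) hlam
  have ha : b + (-lam) * T = a := by rw [hTdef, neg_mul, mul_comm, div_mul_cancel₀ _ hlam.ne']; ring
  have hpde' : ∀ x ∈ Set.Icc a b, ∀ s ∈ Set.Ici (0:ℝ),
      deriv (fun s' => u x s') s + (-lam) * deriv (fun y => u y s) x = 0 := by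
    intro x hx s hs
    have := hpde x hx s hs
    linarith
  have := transport_core u a b (-lam) b t T hT hC1 hpde' ?_ ?_
  · rwa [ha] at this
  · intro s hs
    constructor
    · constructor
      · nlinarith [hs.2, hlam.le]
      · nlinarith [hs.1, hlam.le]
    · linarith [hs.1]
  · intro s hs
    constructor
    · constructor
      · nlinarith [hs.2, hlam]
      · nlinarith [hs.1, hlam]
    · linarith [hs.1]


/-- For the decoupled target system of transport equations on the two-road network
(`α_i` travelling rightward with speed `v_i⋆`, `β_i` travelling leftward with speed `λ_i`,
segment 1 on `[0,L]`, segment 2 on `[−L,0]`, with the boundary reflections of the paper),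
the junction trace `β₂(0,·)` satisfies, for `t ≥ κ₁ + κ₂`, the difference equation
`β₂(0,t) = E₂ (r₁−r₂)/((1−r₁)r₂) β₂(0,t−κ₂) + E₁E₂ β₂(0,t−κ₁−κ₂)`. -/
theorem target_system_trace_difference_equation
    (L v₁ v₂ lam₁ lam₂ r₁ r₂ τ₁ τ₂ : ℝ)
    (hL : 0 < L) (hv₁ : 0 < v₁) (hv₂ : 0 < v₂) (hlam₁ : 0 < lam₁) (hlam₂ : 0 < lam₂)
    (hr₂ : 0 < r₂) (hr₂₁ : r₂ ≤ r₁) (hr₁ : r₁ < 1) (hτ₁ : 0 < τ₁) (hτ₂ : 0 < τ₂)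
    (E₁ E₂ κ₁ κ₂ : ℝ)
    (hE₁ : E₁ = Real.exp (-L / (τ₁ * v₁))) (hE₂ : E₂ = Real.exp (-L / (τ₂ * v₂)))
    (hκ₁ : κ₁ = L / v₁ + L / lam₁) (hκ₂ : κ₂ = L / v₂ + L / lam₂)
    (α₁ β₁ α₂ β₂ : ℝ → ℝ → ℝ)
    (hα₁C1 : ContDiffOn ℝ 1 (fun z : ℝ × ℝ => α₁ z.1 z.2) (Set.Icc 0 L ×ˢ Set.Ici 0))
    (hβ₁C1 : ContDiffOn ℝ 1 (fun z : ℝ × ℝ => β₁ z.1 z.2) (Set.Icc 0 L ×ˢ Set.Ici 0))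
    (hα₂C1 : ContDiffOn ℝ 1 (fun z : ℝ × ℝ => α₂ z.1 z.2) (Set.Icc (-L) 0 ×ˢ Set.Ici 0))
    (hβ₂C1 : ContDiffOn ℝ 1 (fun z : ℝ × ℝ => β₂ z.1 z.2) (Set.Icc (-L) 0 ×ˢ Set.Ici 0))
    (hpdeα₁ : ∀ x ∈ Set.Icc (0 : ℝ) L, ∀ t ∈ Set.Ici (0 : ℝ),
      deriv (fun s => α₁ x s) t + v₁ * deriv (fun y => α₁ y t) x = 0)
    (hpdeβ₁ : ∀ x ∈ Set.Icc (0 : ℝ) L, ∀ t ∈ Set.Ici (0 : ℝ),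
      deriv (fun s => β₁ x s) t - lam₁ * deriv (fun y => β₁ y t) x = 0)
    (hpdeα₂ : ∀ x ∈ Set.Icc (-L) (0 : ℝ), ∀ t ∈ Set.Ici (0 : ℝ),
      deriv (fun s => α₂ x s) t + v₂ * deriv (fun y => α₂ y t) x = 0)
    (hpdeβ₂ : ∀ x ∈ Set.Icc (-L) (0 : ℝ), ∀ t ∈ Set.Ici (0 : ℝ),
      deriv (fun s => β₂ x s) t - lam₂ * deriv (fun y => β₂ y t) x = 0)
    (hbc₁ : ∀ t ∈ Set.Ici (0 : ℝ), β₁ L t = r₁ * E₁ * α₁ L t)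
    (hbc₂ : ∀ t ∈ Set.Ici (0 : ℝ), α₁ 0 t = α₂ 0 t)
    (hbc₃ : ∀ t ∈ Set.Ici (0 : ℝ), α₂ (-L) t = E₂ / r₂ * β₂ (-L) t)
    (hbc₄ : ∀ t ∈ Set.Ici (0 : ℝ),
      β₂ 0 t = r₂ / r₁ * β₁ 0 t + (r₁ - r₂) / (1 - r₁) * α₂ 0 t) :
    ∀ t : ℝ, κ₁ + κ₂ ≤ t →
      β₂ 0 t = E₂ * ((r₁ - r₂) / ((1 - r₁) * r₂)) * β₂ 0 (t - κ₂)
        + E₁ * E₂ * β₂ 0 (t - κ₁ - κ₂) := by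
  intro t ht
  have hr₁pos : 0 < r₁ := lt_of_lt_of_le hr₂ hr₂₁
  have hT₁ : 0 < L / v₁ := div_pos hL hv₁
  have hS₁ : 0 < L / lam₁ := div_pos hL hlam₁
  have hT₂ : 0 < L / v₂ := div_pos hL hv₂
  have hS₂ : 0 < L / lam₂ := div_pos hL hlam₂
  have hκ₁pos : 0 < κ₁ := by rw [hκ₁]; linarith
  have hκ₂pos : 0 < κ₂ := by rw [hκ₂]; linarith
  have hLL : (-L : ℝ) < 0 := by linarith
  have hL0 : (L : ℝ) - 0 = L := by ring
  have h0L : (0 : ℝ) - (-L) = L := by ring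
  -- right transport on road 2: α₂ 0 s = α₂ (-L) (s - L/v₂) for s ≥ L/v₂
  have hα₂trans : ∀ s : ℝ, L / v₂ ≤ s → α₂ 0 s = α₂ (-L) (s - L / v₂) := by
    intro s hs
    have := transport_right α₂ (-L) 0 v₂ hLL hv₂ hα₂C1 hpdeα₂ s (by rwa [h0L])
    rwa [h0L] at this
  -- left transport on road 2: β₂ (-L) s = β₂ 0 (s - L/lam₂) for s ≥ L/lam₂
  have hβ₂trans : ∀ s : ℝ, L / lam₂ ≤ s → β₂ (-L) s = β₂ 0 (s - L / lam₂) := by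
    intro s hs
    have := transport_left β₂ (-L) 0 lam₂ hLL hlam₂ hβ₂C1 hpdeβ₂ s (by rwa [h0L])
    rwa [h0L] at this
  -- combined on road 2: α₂ 0 s = (E₂/r₂) β₂ 0 (s - κ₂) for s ≥ κ₂
  have hroad₂ : ∀ s : ℝ, κ₂ ≤ s → α₂ 0 s = E₂ / r₂ * β₂ 0 (s - κ₂) := by
    intro s hs
    rw [hκ₂] at hs
    have h1 := hα₂trans s (by linarith)
    have h2 := hbc₃ (s - L / v₂) (by simp only [Set.mem_Ici]; linarith)
    have h3 := hβ₂trans (s - L / v₂) (by linarith)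
    have h4 : s - L / v₂ - L / lam₂ = s - κ₂ := by rw [hκ₂]; ring
    rw [h1, h2, h3, h4]
  -- left transport on road 1: β₁ 0 t = β₁ L (t - L/lam₁)
  have hβ₁trans : β₁ 0 t = β₁ L (t - L / lam₁) := by
    have hS₁t : (L - 0) / lam₁ ≤ t := by
      rw [hL0]; rw [hκ₁, hκ₂] at ht; linarith
    have := transport_left β₁ 0 L lam₁ hL hlam₁ hβ₁C1 hpdeβ₁ t hS₁t
    rwa [hL0] at this
  -- right transport on road 1: α₁ L (t - L/lam₁) = α₁ 0 (t - κ₁)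
  have hα₁trans : α₁ L (t - L / lam₁) = α₁ 0 (t - κ₁) := by
    have hT₁t : (L - 0) / v₁ ≤ t - L / lam₁ := by
      rw [hL0]; rw [hκ₁, hκ₂] at ht; linarith
    have := transport_right α₁ 0 L v₁ hL hv₁ hα₁C1 hpdeα₁ (t - L / lam₁) hT₁t
    rw [hL0] at this
    rw [this, hκ₁]; ring_nf
  -- assemble
  have ht0 : (0:ℝ) ≤ t := by linarith
  have htκ₁ : (0:ℝ) ≤ t - κ₁ := by linarith
  have htS₁ : (0:ℝ) ≤ t - L / lam₁ := by rw [hκ₁, hκ₂] at ht; linarith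
  have e1 := hbc₄ t ht0
  have e2 := hbc₁ (t - L / lam₁) (Set.mem_Ici.mpr htS₁)
  have e3 := hbc₂ (t - κ₁) (Set.mem_Ici.mpr htκ₁)
  have e4 := hroad₂ t (by linarith)
  have e5 := hroad₂ (t - κ₁) (by linarith)
  have e6 : t - κ₁ - κ₂ = t - κ₁ - κ₂ := rfl
  rw [hβ₁trans, e2, hα₁trans, e3, e5] at e1
  rw [e4] at e1
  rw [e1]
  have h1r₁ : (1:ℝ) - r₁ ≠ 0 := by intro h; linarith [hr₁]
  field_simp
  ring
end

section
/- Let L > 0, v⋆ > 0, λ > 0, γ p⋆ with λ = γ p⋆ − v⋆ > 0, τ > 0, and let c(ξ) = −(1/τ)·exp(−ξ/(τ v⋆)). Consider the kernel system on the triangle T₁ = {(x,ξ) ∈ [0,L]² : ξ ≥ x}: λ ∂_x K^{vw}(x,ξ) − v⋆ ∂_ξ K^{vw}(x,ξ) = c(ξ) K^{vv}(x,ξ), ∂_x K^{vv}(x,ξ) + ∂_ξ K^{vv}(x,ξ) = 0, with boundary conditions K^{vw}(x,x) = c(x)/(γ p⋆) and K^{vv}(x,L) = −exp(L/(τ v⋆))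 K^{vw}(x,L). Then this Goursat-type system admits a unique bounded solution pair (K^{vw}, K^{vv}) that is continuously differentiable on T₁. -/
set_option maxHeartbeats 1000000

open Real Set intervalIntegral MeasureTheory

/-- The triangular domain `T₁ = {(x,ξ) ∈ [0,L]² : ξ ≥ x}`. -/
def upperTriangle (L : ℝ) : Set (ℝ × ℝ) :=
  {z : ℝ × ℝ | 0 ≤ z.1 ∧ z.1 ≤ z.2 ∧ z.2 ≤ L}

/-- `(Kvw, Kvv)` is a bounded, continuously differentiable solution of the Goursat kernel
system on `T₁`: `λ ∂_x K^{vw} − v⋆ ∂_ξ K^{vw} = c(ξ) K^{vv}`, `∂_x K^{vv} + ∂_ξ K^{vv} = 0`,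
with `K^{vw}(x,x) = c(x)/(γ p⋆)` and `K^{vv}(x,L) = −exp(L/(τ v⋆)) K^{vw}(x,L)`. -/
def IsKernelSolOutgoing (L vs lam γp τ : ℝ) (c : ℝ → ℝ) (Kvw Kvv : ℝ → ℝ → ℝ) : Prop :=
  ContDiffOn ℝ 1 (fun z : ℝ × ℝ => Kvw z.1 z.2) (upperTriangle L) ∧
  ContDiffOn ℝ 1 (fun z : ℝ × ℝ => Kvv z.1 z.2) (upperTriangle L) ∧
  (∃ M : ℝ, ∀ z ∈ upperTriangle L, |Kvw z.1 z.2| ≤ M ∧ |Kvv z.1 z.2| ≤ M) ∧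
  (∀ x ξ : ℝ, (x, ξ) ∈ upperTriangle L →
    lam * deriv (fun y => Kvw y ξ) x - vs * deriv (fun z => Kvw x z) ξ
      = c ξ * Kvv x ξ) ∧
  (∀ x ξ : ℝ, (x, ξ) ∈ upperTriangle L →
    deriv (fun y => Kvv y ξ) x + deriv (fun z => Kvv x z) ξ = 0) ∧
  (∀ x ∈ Set.Icc (0 : ℝ) L, Kvw x x = c x / γp) ∧
  (∀ x ∈ Set.Icc (0 : ℝ) L, Kvv x L = -Real.exp (L / (τ * vs)) * Kvw x L)



noncomputable def Kvw0 (vs γp τ : ℝ) : ℝ → ℝ → ℝ := fun _ ξ => -(1/τ) * Real.exp (-ξ/(τ*vs)) / γp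
noncomputable def Kvv0 (γp τ : ℝ) : ℝ → ℝ → ℝ := fun _ _ => 1/(τ*γp)


private lemma kvw0_contDiff (vs γp τ : ℝ) : ContDiff ℝ 1 (fun z : ℝ × ℝ => Kvw0 vs γp τ z.1 z.2) :=
  (contDiff_const.mul (Real.contDiff_exp.comp ((contDiff_snd.neg).div_const (τ*vs)))).div_const _

private lemma kvw0_hasDeriv (vs γp τ : ℝ) (ξ : ℝ) :
    HasDerivAt (fun z : ℝ => -(1/τ) * Real.exp (-z/(τ*vs)) / γp)
      (Real.exp (-ξ/(τ*vs)) / (τ*(τ*vs)*γp)) ξ := by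
  have h1 : HasDerivAt (fun z : ℝ => -z/(τ*vs)) (-1/(τ*vs)) ξ := by
    simpa using ((hasDerivAt_id ξ).neg).div_const (τ*vs)
  have h2 : HasDerivAt (fun z : ℝ => Real.exp (-z/(τ*vs)))
      (Real.exp (-ξ/(τ*vs)) * (-1/(τ*vs))) ξ := (Real.hasDerivAt_exp _).comp ξ h1
  have h3 := (h2.const_mul (-(1/τ))).div_const γp
  refine h3.congr_deriv ?_
  ring

private lemma hasDerivAt_line (F : ℝ → ℝ → ℝ) {D : ℝ × ℝ →L[ℝ] ℝ} (a b p q t₀ : ℝ)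
    (h : HasFDerivAt (fun z : ℝ × ℝ => F z.1 z.2) D (a + p * t₀, b + q * t₀)) :
    HasDerivAt (fun t => F (a + p * t) (b + q * t)) (p * D (1, 0) + q * D (0, 1)) t₀ := by
  have h1 : HasDerivAt (fun t : ℝ => a + p * t) p t₀ := by
    simpa using ((hasDerivAt_id t₀).const_mul p).const_add a
  have h2 : HasDerivAt (fun t : ℝ => b + q * t) q t₀ := by
    simpa using ((hasDerivAt_id t₀).const_mul q).const_add b
  have hc := h.comp_hasDerivAt t₀ (h1.prodMk h2)
  have hval : D ((p, q) : ℝ × ℝ) = p * D (1, 0) + q * D (0, 1) := by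
    have hpq : ((p, q) : ℝ × ℝ) = p • ((1:ℝ), (0:ℝ)) + q • ((0:ℝ), (1:ℝ)) := by
      simp [Prod.ext_iff]
    rw [hpq, map_add, D.map_smul, D.map_smul]
    simp [smul_eq_mul]
  rw [hval] at hc
  exact hc

private lemma hasDerivAt_slice1 {F : ℝ → ℝ → ℝ} {D : ℝ × ℝ →L[ℝ] ℝ} {a b : ℝ}
    (h : HasFDerivAt (fun z : ℝ × ℝ => F z.1 z.2) D (a, b)) :
    HasDerivAt (fun y => F y b) (D (1, 0)) a :=
  by have := h.comp_hasDerivAt a ((hasDerivAt_id a).prodMk (hasDerivAt_const a b)); exact this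

private lemma hasDerivAt_slice2 {F : ℝ → ℝ → ℝ} {D : ℝ × ℝ →L[ℝ] ℝ} {a b : ℝ}
    (h : HasFDerivAt (fun z : ℝ × ℝ => F z.1 z.2) D (a, b)) :
    HasDerivAt (fun z => F a z) (D (0, 1)) b :=
  h.comp_hasDerivAt b ((hasDerivAt_const b a).prodMk (hasDerivAt_id b))

private lemma tri_mem_nhds {L x ξ : ℝ} (h1 : 0 < x) (h2 : x < ξ) (h3 : ξ < L) :
    upperTriangle L ∈ nhds ((x, ξ) : ℝ × ℝ) := by
  have hopen : IsOpen {z : ℝ × ℝ | 0 < z.1 ∧ z.1 < z.2 ∧ z.2 < L} :=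
    (isOpen_lt continuous_const continuous_fst).inter
      ((isOpen_lt continuous_fst continuous_snd).inter
        (isOpen_lt continuous_snd continuous_const))
  exact Filter.mem_of_superset (hopen.mem_nhds ⟨h1, h2, h3⟩)
    (fun z hz => ⟨le_of_lt hz.1, le_of_lt hz.2.1, le_of_lt hz.2.2⟩)

private lemma exist_sol (L vs lam γp τ : ℝ)
    (hvs : 0 < vs) (hτ : 0 < τ) (hγp : 0 < γp)
    (hlam : lam = γp - vs)
    (c : ℝ → ℝ) (hc : ∀ ξ : ℝ, c ξ = -(1 / τ) * Real.exp (-ξ / (τ * vs))) :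
    IsKernelSolOutgoing L vs lam γp τ c (Kvw0 vs γp τ) (Kvv0 γp τ) := by
  have hτvs : τ * vs ≠ 0 := by positivity
  refine ⟨?_, ?_, ?_, ?_, ?_, ?_, ?_⟩
  · apply ContDiff.contDiffOn
    exact (contDiff_const.mul (Real.contDiff_exp.comp ((contDiff_snd.neg).div_const (τ*vs)))).div_const _
  · exact contDiffOn_const
  · refine ⟨1/(τ*γp), fun z hz => ⟨?_, ?_⟩⟩
    · have he1 : Real.exp (-z.2/(τ*vs)) ≤ 1 := by
        apply Real.exp_le_one_iff.mpr
        have : (0:ℝ) ≤ z.2 := le_trans hz.1 hz.2.1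
        apply div_nonpos_of_nonpos_of_nonneg (by linarith) (by positivity)
      have he0 : 0 < Real.exp (-z.2/(τ*vs)) := Real.exp_pos _
      rw [abs_le]
      have hrw : -(1/τ) * Real.exp (-z.2/(τ*vs)) / γp = -(Real.exp (-z.2/(τ*vs))/(τ*γp)) := by
        ring
      constructor
      · simp only [Kvw0]
        rw [hrw]
        apply neg_le_neg
        gcongr
      · simp only [Kvw0]
        rw [hrw]
        have h1 : (0:ℝ) ≤ Real.exp (-z.2/(τ*vs))/(τ*γp) := by positivity
        have h2 : (0:ℝ) ≤ 1/(τ*γp) := by positivity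
        linarith
    · simp only [Kvv0]
      rw [abs_of_pos (by positivity)]
  · intro x ξ hz
    have hd1 : deriv (fun y => Kvw0 vs γp τ y ξ) x = 0 := by
      simp [Kvw0]
    have hd2 : deriv (fun z => Kvw0 vs γp τ x z) ξ = Real.exp (-ξ/(τ*vs)) / (τ*(τ*vs)*γp) :=
      (kvw0_hasDeriv vs γp τ ξ).deriv
    rw [hd1, hd2, hc]
    simp only [Kvv0]
    field_simp
    ring
  · intro x ξ hz
    simp [Kvv0]
  · intro x hx
    simp only [Kvw0]
    rw [hc, neg_div]
  · intro x hx
    simp only [Kvw0, Kvv0]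
    have hmul : Real.exp (L/(τ*vs)) * Real.exp (-L/(τ*vs)) = 1 := by
      rw [← Real.exp_add, show L/(τ*vs) + -L/(τ*vs) = 0 by ring, Real.exp_zero]
    field_simp
    rw [neg_div] at hmul
    nlinarith [hmul]

private lemma uniq_sol (L vs lam γp τ : ℝ)
    (hL : 0 < L) (hvs : 0 < vs) (hτ : 0 < τ) (hγp : 0 < γp)
    (hlam : γp = lam + vs) (hlampos : 0 < lam)
    (c : ℝ → ℝ) (hc : ∀ ξ : ℝ, c ξ = -(1 / τ) * Real.exp (-ξ / (τ * vs)))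
    (Kvw' Kvv' : ℝ → ℝ → ℝ)
    (hsol : IsKernelSolOutgoing L vs lam γp τ c Kvw' Kvv') :
    ∀ z ∈ upperTriangle L,
      Kvw' z.1 z.2 = Kvw0 vs γp τ z.1 z.2 ∧ Kvv' z.1 z.2 = Kvv0 γp τ z.1 z.2 := by
  obtain ⟨hCw, hCv, -, hPDE1, hPDE2, hBCd, hBCL⟩ := hsol
  have hlv : 0 < lam + vs := by linarith
  have hUcont : ContinuousOn (fun z : ℝ×ℝ => Kvw' z.1 z.2 - Kvw0 vs γp τ z.1 z.2) (upperTriangle L) :=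
    hCw.continuousOn.sub ((contDiff_const.mul (Real.contDiff_exp.comp
      ((contDiff_snd.neg).div_const (τ*vs)))).div_const _ :
        ContDiff ℝ 1 (fun z : ℝ × ℝ => Kvw0 vs γp τ z.1 z.2)).continuous.continuousOn
  have hWcont : ContinuousOn (fun z : ℝ×ℝ => Kvv' z.1 z.2 - Kvv0 γp τ z.1 z.2) (upperTriangle L) :=
    hCv.continuousOn.sub continuous_const.continuousOn
  have hgcont : ContinuousOn (fun x => Kvw' x L - Kvw0 vs γp τ x L) (Icc 0 L) := by
    have hmaps : MapsTo (fun x : ℝ => ((x, L) : ℝ×ℝ)) (Icc 0 L) (upperTriangle L) :=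
      fun x hx => ⟨hx.1, hx.2, le_rfl⟩
    exact hUcont.comp ((continuous_id.prodMk continuous_const).continuousOn) hmaps
  have hdiffw : ∀ x ξ : ℝ, 0 < x → x < ξ → ξ < L →
      HasFDerivAt (fun z : ℝ×ℝ => Kvw' z.1 z.2)
        (fderiv ℝ (fun z : ℝ×ℝ => Kvw' z.1 z.2) (x, ξ)) (x, ξ) := by
    intro x ξ h1 h2 h3
    exact ((hCw.contDiffAt (tri_mem_nhds h1 h2 h3)).differentiableAt one_ne_zero).hasFDerivAt
  have hdiffv : ∀ x ξ : ℝ, 0 < x → x < ξ → ξ < L →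
      HasFDerivAt (fun z : ℝ×ℝ => Kvv' z.1 z.2)
        (fderiv ℝ (fun z : ℝ×ℝ => Kvv' z.1 z.2) (x, ξ)) (x, ξ) := by
    intro x ξ h1 h2 h3
    exact ((hCv.contDiffAt (tri_mem_nhds h1 h2 h3)).differentiableAt one_ne_zero).hasFDerivAt
  have key_u : ∀ a b t₀ : ℝ, 0 < a + lam * t₀ → a + lam * t₀ < b + -vs * t₀ → b + -vs * t₀ < L →
      HasDerivAt
        (fun t => Kvw' (a + lam * t) (b + -vs * t) - Kvw0 vs γp τ (a + lam * t) (b + -vs * t))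
        (c (b + -vs * t₀) *
          (Kvv' (a + lam * t₀) (b + -vs * t₀) - Kvv0 γp τ (a + lam * t₀) (b + -vs * t₀))) t₀ := by
    intro a b t₀ h1 h2 h3
    have hDw := hdiffw _ _ h1 h2 h3
    set D1 := fderiv ℝ (fun z : ℝ×ℝ => Kvw' z.1 z.2) (a + lam * t₀, b + -vs * t₀) with hD1
    have hlineW := hasDerivAt_line Kvw' a b lam (-vs) t₀ hDw
    have hinner : HasDerivAt (fun t : ℝ => b + -vs * t) (-vs) t₀ := by
      simpa using ((hasDerivAt_id t₀).const_mul (-vs)).const_add b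
    have hlineE : HasDerivAt (fun t => -(1/τ) * Real.exp (-(b + -vs * t)/(τ*vs)) / γp)
        (Real.exp (-(b + -vs * t₀)/(τ*vs)) / (τ*(τ*vs)*γp) * -vs) t₀ :=
      by have := (kvw0_hasDeriv vs γp τ (b + -vs * t₀)).comp t₀ hinner; exact this
    have hs1 := (hasDerivAt_slice1 hDw).deriv
    have hs2 := (hasDerivAt_slice2 hDw).deriv
    have hmem : ((a + lam * t₀, b + -vs * t₀) : ℝ×ℝ) ∈ upperTriangle L := ⟨h1.le, h2.le, h3.le⟩
    have hpde := hPDE1 _ _ hmem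
    rw [hs1, hs2] at hpde
    simp only [Kvw0, Kvv0]
    have hvalgoal : c (b + -vs * t₀) * (Kvv' (a + lam * t₀) (b + -vs * t₀) - 1/(τ*γp))
        = (lam * D1 (1, 0) + -vs * D1 (0, 1))
          - Real.exp (-(b + -vs * t₀)/(τ*vs)) / (τ*(τ*vs)*γp) * -vs := by
      rw [hc] at hpde ⊢
      have hvs' : vs ≠ 0 := ne_of_gt hvs
      have hτ' : τ ≠ 0 := ne_of_gt hτ
      have hγp' : γp ≠ 0 := ne_of_gt hγp
      linear_combination (norm := (field_simp; ring1)) -hpde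
    rw [hvalgoal]
    exact hlineW.sub hlineE
  have key_w : ∀ a b t₀ : ℝ, 0 < a + 1 * t₀ → a + 1 * t₀ < b + 1 * t₀ → b + 1 * t₀ < L →
      HasDerivAt
        (fun t => Kvv' (a + 1 * t) (b + 1 * t) - Kvv0 γp τ (a + 1 * t) (b + 1 * t)) 0 t₀ := by
    intro a b t₀ h1 h2 h3
    have hDv := hdiffv _ _ h1 h2 h3
    set D2 := fderiv ℝ (fun z : ℝ×ℝ => Kvv' z.1 z.2) (a + 1 * t₀, b + 1 * t₀) with hD2
    have hlineV := hasDerivAt_line Kvv' a b 1 1 t₀ hDv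
    have hs1 := (hasDerivAt_slice1 hDv).deriv
    have hs2 := (hasDerivAt_slice2 hDv).deriv
    have hmem : ((a + 1 * t₀, b + 1 * t₀) : ℝ×ℝ) ∈ upperTriangle L := ⟨h1.le, h2.le, h3.le⟩
    have hpde := hPDE2 _ _ hmem
    rw [hs1, hs2] at hpde
    simp only [Kvv0]
    have h0 := hlineV.sub (hasDerivAt_const t₀ (1/(τ*γp)))
    have : (1 * D2 (1,0) + 1 * D2 (0,1)) - 0 = 0 := by linarith
    rw [this] at h0
    exact h0
  have hwrepL : ∀ x ∈ Icc (0:ℝ) L, Kvv' x L - Kvv0 γp τ x L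
      = -Real.exp (L/(τ*vs)) * (Kvw' x L - Kvw0 vs γp τ x L) := by
    intro x hx
    rw [hBCL x hx]
    simp only [Kvv0, Kvw0]
    have hmul : Real.exp (L/(τ*vs)) * Real.exp (-L/(τ*vs)) = 1 := by
      rw [← Real.exp_add, show L/(τ*vs) + -L/(τ*vs) = 0 by ring, Real.exp_zero]
    linear_combination (1/(τ*γp)) * hmul
  have htrans : ∀ x ξ : ℝ, 0 ≤ x → x < ξ → ξ ≤ L →
      Kvv' x ξ - Kvv0 γp τ x ξ
        = -Real.exp (L/(τ*vs)) * (Kvw' (x + L - ξ) L - Kvw0 vs γp τ (x + L - ξ) L) := by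
    intro x ξ hx hxξ hξL
    have hT0 : (0:ℝ) ≤ L - ξ := by linarith
    have hψcont : ContinuousOn
        (fun t => Kvv' (x + 1*t) (ξ + 1*t) - Kvv0 γp τ (x + 1*t) (ξ + 1*t)) (Icc 0 (L-ξ)) := by
      have hmaps : MapsTo (fun t : ℝ => ((x + 1*t, ξ + 1*t) : ℝ×ℝ)) (Icc 0 (L-ξ))
          (upperTriangle L) := by
        intro t ht
        simp only [upperTriangle, Set.mem_setOf_eq]
        exact ⟨by linarith [ht.1], by linarith, by linarith [ht.2]⟩
      have hpc : Continuous (fun t : ℝ => ((x + 1*t, ξ + 1*t) : ℝ×ℝ)) :=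
        (continuous_const.add (continuous_const.mul continuous_id)).prodMk
          (continuous_const.add (continuous_const.mul continuous_id))
      exact hWcont.comp hpc.continuousOn hmaps
    have hFTC := integral_eq_sub_of_hasDeriv_right_of_le (f' := fun _ => (0:ℝ)) hT0 hψcont
      (fun t ht => (key_w x ξ t (by simp; linarith [ht.1]) (by simp; linarith)
        (by simp; linarith [ht.2])).hasDerivWithinAt)
      intervalIntegrable_const
    rw [intervalIntegral.integral_zero] at hFTC
    have hval : (Kvv' (x + 1*(L-ξ)) (ξ + 1*(L-ξ)) - Kvv0 γp τ (x + 1*(L-ξ)) (ξ + 1*(L-ξ)))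
        - (Kvv' (x + 1*0) (ξ + 1*0) - Kvv0 γp τ (x + 1*0) (ξ + 1*0)) = 0 := hFTC.symm
    rw [show x + 1*(L-ξ) = x + L - ξ by ring, show ξ + 1*(L-ξ) = L by ring,
        show x + 1*0 = x by ring, show ξ + 1*0 = ξ by ring] at hval
    have hL' := hwrepL (x + L - ξ) ⟨by linarith, by linarith⟩
    linarith [hval, hL']
  have hwrep : ∀ x ξ : ℝ, 0 ≤ x → x ≤ ξ → ξ ≤ L →
      Kvv' x ξ - Kvv0 γp τ x ξ
        = -Real.exp (L/(τ*vs)) * (Kvw' (x + L - ξ) L - Kvw0 vs γp τ (x + L - ξ) L) := by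
    intro x ξ hx hxξ hξL
    rcases lt_or_eq_of_le hxξ with hlt | heq
    · exact htrans x ξ hx hlt hξL
    · subst heq
      rw [show x + L - x = L by ring]
      rcases eq_or_lt_of_le hξL with hxL | hxL
      · subst hxL
        exact hwrepL x ⟨hx, le_rfl⟩
      · have hne : (nhdsWithin (0:ℝ) (Ioo 0 (L - x))).NeBot :=
          left_nhdsWithin_Ioo_neBot (by linarith)
        have hWc := hWcont (x, x) ⟨hx, le_rfl, hxL.le⟩
        have hpath : Filter.Tendsto (fun t : ℝ => ((x, x + t) : ℝ×ℝ))
            (nhdsWithin 0 (Ioo 0 (L-x))) (nhdsWithin (x,x) (upperTriangle L)) := by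
          apply tendsto_nhdsWithin_of_tendsto_nhds_of_eventually_within
          · have hcont : Continuous (fun t : ℝ => ((x, x + t) : ℝ×ℝ)) :=
              continuous_const.prodMk (continuous_const.add continuous_id)
            have h5 := hcont.tendsto 0
            simp only [add_zero] at h5
            exact h5.mono_left nhdsWithin_le_nhds
          · filter_upwards [self_mem_nhdsWithin] with t ht
            simp only [upperTriangle, Set.mem_setOf_eq]
            exact ⟨hx, by linarith [ht.1], by linarith [ht.2]⟩
        have h2 : Filter.Tendsto (fun t : ℝ => Kvv' x (x+t) - Kvv0 γp τ x (x+t))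
            (nhdsWithin 0 (Ioo 0 (L-x))) (nhds (Kvv' x x - Kvv0 γp τ x x)) :=
          hWc.tendsto.comp hpath
        have h2' : Filter.Tendsto
            (fun t : ℝ => -Real.exp (L/(τ*vs)) * (Kvw' (L-t) L - Kvw0 vs γp τ (L-t) L))
            (nhdsWithin 0 (Ioo 0 (L-x))) (nhds (Kvv' x x - Kvv0 γp τ x x)) := by
          apply Filter.Tendsto.congr' _ h2
          filter_upwards [self_mem_nhdsWithin] with t ht
          have := htrans x (x+t) hx (by linarith [ht.1]) (by linarith [ht.2])
          rw [show x + L - (x+t) = L - t by ring] at this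
          exact this
        have h4 : Filter.Tendsto
            (fun t : ℝ => -Real.exp (L/(τ*vs)) * (Kvw' (L-t) L - Kvw0 vs γp τ (L-t) L))
            (nhdsWithin 0 (Ioo 0 (L-x)))
            (nhds (-Real.exp (L/(τ*vs)) * (Kvw' L L - Kvw0 vs γp τ L L))) := by
          apply Filter.Tendsto.const_mul
          have hgc := hgcont L ⟨hL.le, le_rfl⟩
          apply hgc.tendsto.comp
          apply tendsto_nhdsWithin_of_tendsto_nhds_of_eventually_within
          · have hcont : Continuous (fun t : ℝ => L - t) :=
              continuous_const.sub continuous_id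
            have h5 := hcont.tendsto 0
            simp only [sub_zero] at h5
            exact h5.mono_left nhdsWithin_le_nhds
          · filter_upwards [self_mem_nhdsWithin] with t ht
            exact ⟨by linarith [ht.1, ht.2], by linarith [ht.1]⟩
        exact tendsto_nhds_unique h2' h4
  have hccont : Continuous c := by
    have hceq : c = fun ξ => -(1/τ) * Real.exp (-ξ/(τ*vs)) := funext hc
    rw [hceq]
    exact continuous_const.mul (Real.continuous_exp.comp ((continuous_id.neg).div_const _))
  have hchar : ∀ x ξ : ℝ, 0 ≤ x → x ≤ ξ → ξ ≤ L →
      Kvw' x ξ - Kvw0 vs γp τ x ξ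
        = -∫ t in (0:ℝ)..((ξ - x)/(lam+vs)),
            c (ξ + -vs*t) *
              (-Real.exp (L/(τ*vs)) *
                (Kvw' (x + lam*t + L - (ξ + -vs*t)) L
                  - Kvw0 vs γp τ (x + lam*t + L - (ξ + -vs*t)) L)) := by
    intro x ξ hx hxξ hξL
    have hT0 : (0:ℝ) ≤ (ξ - x)/(lam+vs) := div_nonneg (by linarith) hlv.le
    have hφcont : ContinuousOn
        (fun t => Kvw' (x + lam*t) (ξ + -vs*t) - Kvw0 vs γp τ (x + lam*t) (ξ + -vs*t))
        (Icc 0 ((ξ-x)/(lam+vs))) := by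
      have hmaps : MapsTo (fun t : ℝ => ((x + lam*t, ξ + -vs*t) : ℝ×ℝ))
          (Icc 0 ((ξ-x)/(lam+vs))) (upperTriangle L) := by
        intro t ht
        have h2' := (le_div_iff₀ hlv).mp ht.2
        simp only [upperTriangle, Set.mem_setOf_eq]
        refine ⟨?_, ?_, ?_⟩
        · nlinarith [mul_nonneg hlampos.le ht.1]
        · nlinarith [h2']
        · nlinarith [mul_nonneg hvs.le ht.1]
      have hpc : Continuous (fun t : ℝ => ((x + lam*t, ξ + -vs*t) : ℝ×ℝ)) :=
        (continuous_const.add (continuous_const.mul continuous_id)).prodMk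
          (continuous_const.add (continuous_const.mul continuous_id))
      exact hUcont.comp hpc.continuousOn hmaps
    have hderiv : ∀ t ∈ Ioo (0:ℝ) ((ξ-x)/(lam+vs)),
        HasDerivWithinAt
          (fun t => Kvw' (x + lam*t) (ξ + -vs*t) - Kvw0 vs γp τ (x + lam*t) (ξ + -vs*t))
          ((fun t => c (ξ + -vs*t) *
              (-Real.exp (L/(τ*vs)) *
                (Kvw' (x + lam*t + L - (ξ + -vs*t)) L
                  - Kvw0 vs γp τ (x + lam*t + L - (ξ + -vs*t)) L))) t) (Ioi t) t := by
      intro t ht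
      have h2' := (lt_div_iff₀ hlv).mp ht.2
      have h1 : 0 < x + lam*t := by nlinarith [mul_pos hlampos ht.1]
      have h2 : x + lam*t < ξ + -vs*t := by nlinarith
      have h3 : ξ + -vs*t < L := by nlinarith [mul_pos hvs ht.1]
      have hk := key_u x ξ t h1 h2 h3
      have hw := hwrep (x + lam*t) (ξ + -vs*t) h1.le h2.le h3.le
      rw [hw] at hk
      exact hk.hasDerivWithinAt
    have harg : Continuous (fun t : ℝ => x + lam*t + L - (ξ + -vs*t)) := by
      have : (fun t : ℝ => x + lam*t + L - (ξ + -vs*t))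
          = fun t : ℝ => (x + L - ξ) + (lam + vs)*t := by funext t; ring
      rw [this]
      exact continuous_const.add (continuous_const.mul continuous_id)
    have hmaps2 : MapsTo (fun t : ℝ => x + lam*t + L - (ξ + -vs*t))
        (Icc 0 ((ξ-x)/(lam+vs))) (Icc 0 L) := by
      intro t ht
      have h2' := (le_div_iff₀ hlv).mp ht.2
      simp only [Set.mem_Icc]
      constructor
      · nlinarith [mul_nonneg hlampos.le ht.1, mul_nonneg hvs.le ht.1]
      · nlinarith
    have hint : IntervalIntegrable
        (fun t => c (ξ + -vs*t) *
          (-Real.exp (L/(τ*vs)) *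
            (Kvw' (x + lam*t + L - (ξ + -vs*t)) L
              - Kvw0 vs γp τ (x + lam*t + L - (ξ + -vs*t)) L)))
        volume 0 ((ξ-x)/(lam+vs)) := by
      apply ContinuousOn.intervalIntegrable
      apply ContinuousOn.mul
      · exact (hccont.comp (continuous_const.add (continuous_const.mul continuous_id))).continuousOn
      · apply ContinuousOn.mul continuousOn_const
        rw [uIcc_of_le hT0]
        exact hgcont.comp harg.continuousOn hmaps2
    have hFTC := integral_eq_sub_of_hasDeriv_right_of_le hT0 hφcont hderiv hint
    have hend : (Kvw' (x + lam*((ξ-x)/(lam+vs))) (ξ + -vs*((ξ-x)/(lam+vs)))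
          - Kvw0 vs γp τ (x + lam*((ξ-x)/(lam+vs))) (ξ + -vs*((ξ-x)/(lam+vs))))
        - (Kvw' (x + lam*0) (ξ + -vs*0) - Kvw0 vs γp τ (x + lam*0) (ξ + -vs*0))
        = ∫ t in (0:ℝ)..((ξ-x)/(lam+vs)),
            c (ξ + -vs*t) *
              (-Real.exp (L/(τ*vs)) *
                (Kvw' (x + lam*t + L - (ξ + -vs*t)) L
                  - Kvw0 vs γp τ (x + lam*t + L - (ξ + -vs*t)) L)) := hFTC.symm
    rw [show x + lam*0 = x by ring, show ξ + -vs*0 = ξ by ring] at hend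
    have heq2 : ξ + -vs*((ξ-x)/(lam+vs)) = x + lam*((ξ-x)/(lam+vs)) := by
      field_simp
      ring
    rw [heq2] at hend
    have hx0mem : x + lam*((ξ-x)/(lam+vs)) ∈ Icc (0:ℝ) L := by
      have h6 : (lam+vs) * ((ξ-x)/(lam+vs)) = ξ - x := by field_simp
      have h5 : lam * ((ξ-x)/(lam+vs)) ≤ (lam+vs) * ((ξ-x)/(lam+vs)) :=
        mul_le_mul_of_nonneg_right (by linarith) hT0
      have h7 : 0 ≤ lam*((ξ-x)/(lam+vs)) := mul_nonneg hlampos.le hT0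
      exact ⟨by linarith, by linarith⟩
    have hdiag : Kvw' (x + lam*((ξ-x)/(lam+vs))) (x + lam*((ξ-x)/(lam+vs)))
        - Kvw0 vs γp τ (x + lam*((ξ-x)/(lam+vs))) (x + lam*((ξ-x)/(lam+vs))) = 0 := by
      rw [hBCd _ hx0mem]
      simp only [Kvw0]
      rw [hc]
      ring
    linarith [hend, hdiag]
  -- integral bound for g x := Kvw' x L - Kvw0 x L
  have hgbound : ∀ x ∈ Icc (0:ℝ) L,
      |Kvw' x L - Kvw0 vs γp τ x L|
        ≤ (Real.exp (L/(τ*vs)) / (τ*(lam+vs)))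
            * ∫ s in x..L, |Kvw' s L - Kvw0 vs γp τ s L| := by
    intro x hx
    have hT0 : (0:ℝ) ≤ (L - x)/(lam+vs) := div_nonneg (by linarith [hx.2]) hlv.le
    have hgeq := hchar x L hx.1 hx.2 le_rfl
    have harg : Continuous (fun t : ℝ => x + lam*t + L - (L + -vs*t)) := by
      have : (fun t : ℝ => x + lam*t + L - (L + -vs*t))
          = fun t : ℝ => x + (lam + vs)*t := by funext t; ring
      rw [this]
      exact continuous_const.add (continuous_const.mul continuous_id)
    have hmaps2 : MapsTo (fun t : ℝ => x + lam*t + L - (L + -vs*t))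
        (Icc 0 ((L-x)/(lam+vs))) (Icc 0 L) := by
      intro t ht
      have h2' := (le_div_iff₀ hlv).mp ht.2
      simp only [Set.mem_Icc]
      constructor
      · nlinarith [mul_nonneg hlampos.le ht.1, mul_nonneg hvs.le ht.1, hx.1]
      · nlinarith [hx.1]
    have hint1 : IntervalIntegrable
        (fun t => |c (L + -vs*t) *
          (-Real.exp (L/(τ*vs)) *
            (Kvw' (x + lam*t + L - (L + -vs*t)) L
              - Kvw0 vs γp τ (x + lam*t + L - (L + -vs*t)) L))|)
        volume 0 ((L-x)/(lam+vs)) := by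
      apply ContinuousOn.intervalIntegrable
      apply ContinuousOn.abs
      apply ContinuousOn.mul
      · exact (hccont.comp (continuous_const.add (continuous_const.mul continuous_id))).continuousOn
      · apply ContinuousOn.mul continuousOn_const
        rw [uIcc_of_le hT0]
        exact hgcont.comp harg.continuousOn hmaps2
    have hlin : Continuous (fun t : ℝ => (lam+vs)*t + x) :=
      (continuous_const.mul continuous_id).add continuous_const
    have hmaps3 : MapsTo (fun t : ℝ => (lam+vs)*t + x)
        (Icc 0 ((L-x)/(lam+vs))) (Icc 0 L) := by
      intro t ht
      have h2' := (le_div_iff₀ hlv).mp ht.2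
      simp only [Set.mem_Icc]
      constructor
      · nlinarith [mul_nonneg hlv.le ht.1, hx.1]
      · nlinarith [hx.1]
    have hint2 : IntervalIntegrable
        (fun t => (Real.exp (L/(τ*vs))/τ)
          * |Kvw' ((lam+vs)*t + x) L - Kvw0 vs γp τ ((lam+vs)*t + x) L|)
        volume 0 ((L-x)/(lam+vs)) := by
      apply ContinuousOn.intervalIntegrable
      apply ContinuousOn.mul continuousOn_const
      apply ContinuousOn.abs
      rw [uIcc_of_le hT0]
      exact hgcont.comp hlin.continuousOn hmaps3
    have hptwise : ∀ t ∈ Icc (0:ℝ) ((L-x)/(lam+vs)),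
        |c (L + -vs*t) *
          (-Real.exp (L/(τ*vs)) *
            (Kvw' (x + lam*t + L - (L + -vs*t)) L
              - Kvw0 vs γp τ (x + lam*t + L - (L + -vs*t)) L))|
          ≤ (Real.exp (L/(τ*vs))/τ)
              * |Kvw' ((lam+vs)*t + x) L - Kvw0 vs γp τ ((lam+vs)*t + x) L| := by
      intro t ht
      have h2' := (le_div_iff₀ hlv).mp ht.2
      rw [show x + lam*t + L - (L + -vs*t) = (lam+vs)*t + x by ring]
      rw [abs_mul, abs_mul, abs_neg, abs_of_pos (Real.exp_pos _)]
      have hcb : |c (L + -vs*t)| ≤ 1/τ := by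
        rw [hc, abs_mul, abs_neg, abs_of_pos (by positivity : (0:ℝ) < 1/τ),
          abs_of_pos (Real.exp_pos _)]
        have hle1 : Real.exp (-(L + -vs*t)/(τ*vs)) ≤ 1 := by
          apply Real.exp_le_one_iff.mpr
          apply div_nonpos_of_nonpos_of_nonneg _ (by positivity)
          have : 0 ≤ vs*t := mul_nonneg hvs.le ht.1
          nlinarith [mul_nonneg hlampos.le ht.1, hx.1]
        calc 1/τ * Real.exp (-(L + -vs*t)/(τ*vs)) ≤ 1/τ * 1 :=
              mul_le_mul_of_nonneg_left hle1 (by positivity)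
          _ = 1/τ := mul_one _
      have h8 : (0:ℝ) ≤ Real.exp (L/(τ*vs))
          * |Kvw' ((lam+vs)*t + x) L - Kvw0 vs γp τ ((lam+vs)*t + x) L| :=
        mul_nonneg (Real.exp_pos _).le (abs_nonneg _)
      calc |c (L + -vs*t)| * (Real.exp (L/(τ*vs))
              * |Kvw' ((lam+vs)*t + x) L - Kvw0 vs γp τ ((lam+vs)*t + x) L|)
          ≤ (1/τ) * (Real.exp (L/(τ*vs))
              * |Kvw' ((lam+vs)*t + x) L - Kvw0 vs γp τ ((lam+vs)*t + x) L|) :=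
            mul_le_mul_of_nonneg_right hcb h8
        _ = (Real.exp (L/(τ*vs))/τ)
              * |Kvw' ((lam+vs)*t + x) L - Kvw0 vs γp τ ((lam+vs)*t + x) L| := by ring
    have habs : |Kvw' x L - Kvw0 vs γp τ x L|
        ≤ ∫ t in (0:ℝ)..((L-x)/(lam+vs)),
            |c (L + -vs*t) *
              (-Real.exp (L/(τ*vs)) *
                (Kvw' (x + lam*t + L - (L + -vs*t)) L
                  - Kvw0 vs γp τ (x + lam*t + L - (L + -vs*t)) L))| := by
      rw [hgeq, abs_neg]
      exact intervalIntegral.abs_integral_le_integral_abs hT0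
    have hmono := intervalIntegral.integral_mono_on hT0 hint1 hint2 hptwise
    have hcomp : (∫ t in (0:ℝ)..((L-x)/(lam+vs)),
          |Kvw' ((lam+vs)*t + x) L - Kvw0 vs γp τ ((lam+vs)*t + x) L|)
        = (lam+vs)⁻¹ * ∫ s in x..L, |Kvw' s L - Kvw0 vs γp τ s L| := by
      have hcm := intervalIntegral.integral_comp_mul_add (a := 0) (b := (L-x)/(lam+vs))
        (fun s => |Kvw' s L - Kvw0 vs γp τ s L|) (ne_of_gt hlv) x
      rw [show (lam+vs)*0 + x = x by ring,
        show (lam+vs)*((L-x)/(lam+vs)) + x = L by field_simp; ring] at hcm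
      simpa [smul_eq_mul] using hcm
    rw [intervalIntegral.integral_const_mul, hcomp] at hmono
    have hring : (Real.exp (L/(τ*vs))/τ)
          * ((lam+vs)⁻¹ * ∫ s in x..L, |Kvw' s L - Kvw0 vs γp τ s L|)
        = (Real.exp (L/(τ*vs)) / (τ*(lam+vs)))
          * ∫ s in x..L, |Kvw' s L - Kvw0 vs γp τ s L| := by
      have hne1 : τ ≠ 0 := hτ.ne'
      have hne2 : lam + vs ≠ 0 := hlv.ne'
      field_simp
    linarith [habs, hmono, hring.le, hring.ge]
  -- Grönwall argument: g ≡ 0 on [0,L]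
  have hgint : ∀ x1 x2 : ℝ, x1 ∈ Icc (0:ℝ) L → x2 ∈ Icc (0:ℝ) L →
      IntervalIntegrable (fun s => |Kvw' s L - Kvw0 vs γp τ s L|) volume x1 x2 := by
    intro x1 x2 h1 h2
    apply ContinuousOn.intervalIntegrable
    exact (hgcont.abs).mono ((Set.ordConnected_Icc).uIcc_subset h1 h2)
  have hGcont : ContinuousOn
      (fun x => ∫ s in x..L, |Kvw' s L - Kvw0 vs γp τ s L|) (Icc 0 L) := by
    have hio : IntegrableOn (fun s => |Kvw' s L - Kvw0 vs γp τ s L|) (uIcc 0 L) volume := by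
      rw [uIcc_of_le hL.le]
      exact (hgcont.abs).integrableOn_compact isCompact_Icc
    have := continuousOn_primitive_interval_left hio
    rw [uIcc_of_le hL.le] at this
    exact this
  have hGderiv : ∀ x ∈ Ioo (0:ℝ) L,
      HasDerivAt (fun y => ∫ s in y..L, |Kvw' s L - Kvw0 vs γp τ s L|)
        (-|Kvw' x L - Kvw0 vs γp τ x L|) x := by
    intro x hx
    exact intervalIntegral.integral_hasDerivAt_left
      (hgint x L ⟨hx.1.le, hx.2.le⟩ ⟨hL.le, le_rfl⟩)
      (ContinuousOn.stronglyMeasurableAtFilter isOpen_Ioo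
        ((hgcont.abs).mono Ioo_subset_Icc_self) x hx)
      ((hgcont.abs).continuousAt (Icc_mem_nhds hx.1 hx.2))
  set K0 := Real.exp (L/(τ*vs)) / (τ*(lam+vs)) with hK0
  have hK0pos : 0 < K0 := by rw [hK0]; positivity
  have hFd : ∀ x ∈ Ioo (0:ℝ) L,
      HasDerivAt (fun y => Real.exp (K0*y) * ∫ s in y..L, |Kvw' s L - Kvw0 vs γp τ s L|)
        ((Real.exp (K0*x) * K0) * (∫ s in x..L, |Kvw' s L - Kvw0 vs γp τ s L|)
          + Real.exp (K0*x) * -|Kvw' x L - Kvw0 vs γp τ x L|) x := by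
    intro x hx
    have h1 : HasDerivAt (fun y : ℝ => Real.exp (K0*y)) (Real.exp (K0*x) * K0) x :=
      (Real.hasDerivAt_exp (K0*x)).comp x (by simpa using (hasDerivAt_id x).const_mul K0)
    exact h1.mul (hGderiv x hx)
  have hFmono : MonotoneOn
      (fun y => Real.exp (K0*y) * ∫ s in y..L, |Kvw' s L - Kvw0 vs γp τ s L|) (Icc 0 L) := by
    apply monotoneOn_of_deriv_nonneg (convex_Icc 0 L)
    · exact ((Real.continuous_exp.comp (continuous_const.mul continuous_id)).continuousOn).mul
        hGcont
    · rw [interior_Icc]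
      intro x hx
      exact (hFd x hx).differentiableAt.differentiableWithinAt
    · rw [interior_Icc]
      intro x hx
      rw [(hFd x hx).deriv]
      have hb := hgbound x ⟨hx.1.le, hx.2.le⟩
      have hGnn : 0 ≤ ∫ s in x..L, |Kvw' s L - Kvw0 vs γp τ s L| :=
        intervalIntegral.integral_nonneg hx.2.le (fun s _ => abs_nonneg _)
      nlinarith [mul_le_mul_of_nonneg_left hb (Real.exp_pos (K0*x)).le,
        Real.exp_pos (K0*x)]
  have hGzero : ∀ x ∈ Icc (0:ℝ) L,
      (∫ s in x..L, |Kvw' s L - Kvw0 vs γp τ s L|) = 0 := by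
    intro x hx
    have h1 := hFmono hx (right_mem_Icc.mpr hL.le) hx.2
    simp only [intervalIntegral.integral_same, mul_zero] at h1
    have h3 : 0 ≤ ∫ s in x..L, |Kvw' s L - Kvw0 vs γp τ s L| :=
      intervalIntegral.integral_nonneg hx.2 (fun s _ => abs_nonneg _)
    nlinarith [Real.exp_pos (K0*x)]
  have hgzero : ∀ x ∈ Icc (0:ℝ) L, Kvw' x L - Kvw0 vs γp τ x L = 0 := by
    intro x hx
    have hb := hgbound x hx
    rw [hGzero x hx, mul_zero] at hb
    exact abs_eq_zero.mp (le_antisymm hb (abs_nonneg _))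
  -- conclusion
  intro z hz
  obtain ⟨hz1, hz2, hz3⟩ := hz
  constructor
  · have h := hchar z.1 z.2 hz1 hz2 hz3
    have hT0 : (0:ℝ) ≤ (z.2 - z.1)/(lam+vs) := div_nonneg (by linarith) hlv.le
    have hEq : EqOn
        (fun t => c (z.2 + -vs*t) *
          (-Real.exp (L/(τ*vs)) *
            (Kvw' (z.1 + lam*t + L - (z.2 + -vs*t)) L
              - Kvw0 vs γp τ (z.1 + lam*t + L - (z.2 + -vs*t)) L)))
        (fun _ => (0:ℝ)) (uIcc 0 ((z.2 - z.1)/(lam+vs))) := by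
      intro t ht
      rw [uIcc_of_le hT0] at ht
      have h2' := (le_div_iff₀ hlv).mp ht.2
      have hargmem : z.1 + lam*t + L - (z.2 + -vs*t) ∈ Icc (0:ℝ) L := by
        constructor
        · nlinarith [mul_nonneg hlampos.le ht.1, mul_nonneg hvs.le ht.1]
        · nlinarith
      show c (z.2 + -vs*t) *
          (-Real.exp (L/(τ*vs)) *
            (Kvw' (z.1 + lam*t + L - (z.2 + -vs*t)) L
              - Kvw0 vs γp τ (z.1 + lam*t + L - (z.2 + -vs*t)) L)) = 0
      rw [hgzero _ hargmem, mul_zero, mul_zero]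
    rw [intervalIntegral.integral_congr hEq, intervalIntegral.integral_zero, neg_zero] at h
    linarith [h]
  · have h := hwrep z.1 z.2 hz1 hz2 hz3
    have hargmem : z.1 + L - z.2 ∈ Icc (0:ℝ) L := ⟨by linarith, by linarith⟩
    rw [hgzero _ hargmem, mul_zero] at h
    linarith [h]

/-- Well-posedness of the backstepping kernel equations on the outgoing road: the Goursat-type
kernel system on the triangle `T₁` admits a unique bounded continuously differentiable
solution pair. -/
theorem kernel_wellposed_outgoing (L vs lam γ ps τ : ℝ)
    (hL : 0 < L) (hvs : 0 < vs) (hτ : 0 < τ)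
    (hlam : lam = γ * ps - vs) (hlampos : 0 < lam)
    (c : ℝ → ℝ) (hc : ∀ ξ : ℝ, c ξ = -(1 / τ) * Real.exp (-ξ / (τ * vs))) :
    ∃ Kvw Kvv : ℝ → ℝ → ℝ,
      IsKernelSolOutgoing L vs lam (γ * ps) τ c Kvw Kvv ∧
      ∀ Kvw' Kvv' : ℝ → ℝ → ℝ,
        IsKernelSolOutgoing L vs lam (γ * ps) τ c Kvw' Kvv' →
        ∀ z ∈ upperTriangle L,
          Kvw' z.1 z.2 = Kvw z.1 z.2 ∧ Kvv' z.1 z.2 = Kvv z.1 z.2 := by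
  have hγp : 0 < γ * ps := by nlinarith
  refine ⟨Kvw0 vs (γ * ps) τ, Kvv0 (γ * ps) τ,
    exist_sol L vs lam (γ * ps) τ hvs hτ hγp (by linarith) c hc, ?_⟩
  intro Kvw' Kvv' hsol z hz
  exact uniq_sol L vs lam (γ * ps) τ hL hvs hτ hγp (by linarith) hlampos c hc Kvw' Kvv' hsol z hz
end

section
/- Let L > 0, v⋆ > 0, λ = γ p⋆ − v⋆ > 0, τ > 0, and let c(ξ) = −(1/τ)·exp(−ξ/(τ v⋆)). Consider the kernel system on the triangle T₂ = {(x,ξ) ∈ [−L,0]² : ξ ≤ x}: λ ∂_x K^{vw}(x,ξ) − v⋆ ∂_ξ K^{vw}(x,ξ) = c(ξ) K^{vv}(x,ξ), ∂_x K^{vv}(x,ξ) + ∂_ξ K^{vv}(x,ξ) = 0, with boundary conditions K^{vw}(x,x) = −c(x)/(γ p⋆) and K^{vv}(x,−L) = −exp(−L/(τ v⋆)) K^{vw}(x,−L). Then this Goursat-type system admits a unique bounded solution pair (K^{vw}, K^{vv}) that is continuously differentiable on T₂. -/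
/-- The triangular domain `T₂ = {(x,ξ) ∈ [−L,0]² : ξ ≤ x}`. -/
def lowerTriangle (L : ℝ) : Set (ℝ × ℝ) :=
  {z : ℝ × ℝ | -L ≤ z.2 ∧ z.2 ≤ z.1 ∧ z.1 ≤ 0}

/-- `(Kvw, Kvv)` is a bounded, continuously differentiable solution of the Goursat kernel
system on `T₂`: `λ ∂_x K^{vw} − v⋆ ∂_ξ K^{vw} = c(ξ) K^{vv}`, `∂_x K^{vv} + ∂_ξ K^{vv} = 0`,
with `K^{vw}(x,x) = −c(x)/(γ p⋆)` and `K^{vv}(x,−L) = −exp(−L/(τ v⋆)) K^{vw}(x,−L)`. -/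
def IsKernelSolIncoming (L vs lam γp τ : ℝ) (c : ℝ → ℝ) (Kvw Kvv : ℝ → ℝ → ℝ) : Prop :=
  ContDiffOn ℝ 1 (fun z : ℝ × ℝ => Kvw z.1 z.2) (lowerTriangle L) ∧
  ContDiffOn ℝ 1 (fun z : ℝ × ℝ => Kvv z.1 z.2) (lowerTriangle L) ∧
  (∃ M : ℝ, ∀ z ∈ lowerTriangle L, |Kvw z.1 z.2| ≤ M ∧ |Kvv z.1 z.2| ≤ M) ∧
  (∀ x ξ : ℝ, (x, ξ) ∈ lowerTriangle L →
    lam * deriv (fun y => Kvw y ξ) x - vs * deriv (fun z => Kvw x z) ξ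
      = c ξ * Kvv x ξ) ∧
  (∀ x ξ : ℝ, (x, ξ) ∈ lowerTriangle L →
    deriv (fun y => Kvv y ξ) x + deriv (fun z => Kvv x z) ξ = 0) ∧
  (∀ x ∈ Set.Icc (-L) (0 : ℝ), Kvw x x = -(c x / γp)) ∧
  (∀ x ∈ Set.Icc (-L) (0 : ℝ), Kvv x (-L) = -Real.exp (-L / (τ * vs)) * Kvw x (-L))

open Set

noncomputable section AUX

lemma hasDerivAt_dir {K : ℝ → ℝ → ℝ} {T : Set (ℝ × ℝ)}
    (hK : ContDiffOn ℝ 1 (fun z : ℝ × ℝ => K z.1 z.2) T)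
    {x y : ℝ} (hz : T ∈ nhds ((x, y) : ℝ × ℝ)) (p q : ℝ) :
    HasDerivAt (fun s : ℝ => K (x + p * s) (y + q * s))
      (p * deriv (fun u => K u y) x + q * deriv (fun w => K x w) y) 0 := by
  set F : ℝ × ℝ → ℝ := fun z => K z.1 z.2 with hF
  have hdiff : DifferentiableAt ℝ F (x, y) :=
    ((hK.contDiffAt hz).differentiableAt one_ne_zero)
  set f := fderiv ℝ F (x, y) with hf
  have hFd : HasFDerivAt F f (x, y) := hdiff.hasFDerivAt
  have hsec1 : HasDerivAt (fun u => K u y) (f (1, 0)) x := by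
    have hg : HasDerivAt (fun u : ℝ => ((u, y) : ℝ × ℝ)) (1, 0) x :=
      (hasDerivAt_id x).prodMk (hasDerivAt_const x y)
    exact (hFd.comp_hasDerivAt x hg :)
  have hsec2 : HasDerivAt (fun w => K x w) (f (0, 1)) y := by
    have hg : HasDerivAt (fun w : ℝ => ((x, w) : ℝ × ℝ)) (0, 1) y :=
      (hasDerivAt_const y x).prodMk (hasDerivAt_id y)
    exact (hFd.comp_hasDerivAt y hg :)
  have hcurve : HasDerivAt (fun s : ℝ => ((x + p * s, y + q * s) : ℝ × ℝ)) (p, q) 0 := by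
    have h1 : HasDerivAt (fun s : ℝ => x + p * s) p 0 := by
      simpa using ((hasDerivAt_id (0:ℝ)).const_mul p).const_add x
    have h2 : HasDerivAt (fun s : ℝ => y + q * s) q 0 := by
      simpa using ((hasDerivAt_id (0:ℝ)).const_mul q).const_add y
    exact h1.prodMk h2
  have hFd' : HasFDerivAt F f (x + p * 0, y + q * 0) := by simpa using hFd
  have hmain : HasDerivAt (fun s : ℝ => F (x + p * s, y + q * s)) (f (p, q)) 0 :=
    (hFd'.comp_hasDerivAt 0 hcurve :)
  have hval : f (p, q) = p * deriv (fun u => K u y) x + q * deriv (fun w => K x w) y := by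
    rw [hsec1.deriv, hsec2.deriv]
    have : ((p, q) : ℝ × ℝ) = p • ((1,0) : ℝ × ℝ) + q • ((0,1) : ℝ × ℝ) := by
      simp [Prod.ext_iff]
    rw [this, map_add, map_smul, map_smul]; simp [smul_eq_mul]
  exact hval ▸ hmain

lemma hasDerivAt_shift {f : ℝ → ℝ} {d s : ℝ}
    (h : HasDerivAt (fun σ => f (s + σ)) d 0) : HasDerivAt f d s := by
  have hg : HasDerivAt (fun t : ℝ => t - s) 1 s := by
    simpa using (hasDerivAt_id s).sub_const s
  have hcomp : HasDerivAt ((fun σ => f (s + σ)) ∘ (fun t : ℝ => t - s)) (d * 1) s := by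
    refine HasDerivAt.comp s ?_ hg
    simpa using h
  have heq : ((fun σ => f (s + σ)) ∘ (fun t : ℝ => t - s)) = f := by
    funext t; simp only [Function.comp]; congr 1; ring
  rw [heq] at hcomp; simpa using hcomp

lemma zero_on_closure {F : ℝ × ℝ → ℝ} {T U : Set (ℝ × ℝ)} (hUT : U ⊆ T)
    (hF : ContinuousOn F T) (h0 : ∀ z ∈ U, F z = 0) {z : ℝ × ℝ}
    (hzT : z ∈ T) (hcl : z ∈ closure U) : F z = 0 := by
  have hne : (nhdsWithin z U).NeBot := mem_closure_iff_nhdsWithin_neBot.mp hcl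
  have h1 : Filter.Tendsto F (nhdsWithin z U) (nhds (F z)) :=
    (hF.continuousWithinAt hzT).mono hUT
  have h2 : Filter.Tendsto F (nhdsWithin z U) (nhds 0) := by
    refine Filter.Tendsto.congr' ?_ tendsto_const_nhds
    filter_upwards [self_mem_nhdsWithin] with w hw
    exact (h0 w hw).symm
  exact tendsto_nhds_unique h1 h2

def lowerTriangleO (L : ℝ) : Set (ℝ × ℝ) :=
  {z : ℝ × ℝ | -L < z.2 ∧ z.2 < z.1 ∧ z.1 < 0}

lemma isOpen_lowerTriangleO (L : ℝ) : IsOpen (lowerTriangleO L) := by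
  have h1 : IsOpen {z : ℝ × ℝ | -L < z.2} := isOpen_lt continuous_const continuous_snd
  have h2 : IsOpen {z : ℝ × ℝ | z.2 < z.1} := isOpen_lt continuous_snd continuous_fst
  have h3 : IsOpen {z : ℝ × ℝ | z.1 < 0} := isOpen_lt continuous_fst continuous_const
  have : lowerTriangleO L = ({z : ℝ × ℝ | -L < z.2} ∩ {z : ℝ × ℝ | z.2 < z.1}) ∩ {z : ℝ × ℝ | z.1 < 0} := by
    ext w; simp [lowerTriangleO, and_assoc]
  rw [this]; exact (h1.inter h2).inter h3

lemma lowerTriangleO_subset (L : ℝ) : lowerTriangleO L ⊆ lowerTriangle L :=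
  fun z hz => ⟨le_of_lt hz.1, le_of_lt hz.2.1, le_of_lt hz.2.2⟩

lemma mem_closure_lowerTriangleO {L : ℝ} (hL : 0 < L) {z : ℝ × ℝ} (hz : z ∈ lowerTriangle L) :
    z ∈ closure (lowerTriangleO L) := by
  rw [mem_closure_iff_seq_limit]
  set z₀ : ℝ × ℝ := (-L/3, -2*L/3) with hz₀
  refine ⟨fun n => z + ((1:ℝ)/(n+1)) • (z₀ - z), fun n => ?_, ?_⟩
  · obtain ⟨h1, h2, h3⟩ := hz
    have hθ1 : (0:ℝ) < 1/(n+1) := by positivity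
    have hθ2 : (1:ℝ)/(n+1) ≤ 1 := by
      rw [div_le_one (by positivity)]; simp
    refine ⟨?_, ?_, ?_⟩
    · show -L < z.2 + (1/(n+1)) * (z₀.2 - z.2)
      simp only [hz₀]; nlinarith
    · show z.2 + (1/(n+1)) * (z₀.2 - z.2) < z.1 + (1/(n+1)) * (z₀.1 - z.1)
      simp only [hz₀]; nlinarith
    · show z.1 + (1/(n+1)) * (z₀.1 - z.1) < 0
      simp only [hz₀]; nlinarith
  · have h : Filter.Tendsto (fun n : ℕ => ((1:ℝ)/(n+1))) Filter.atTop (nhds 0) :=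
      tendsto_one_div_add_atTop_nhds_zero_nat
    have := ((h.smul_const (z₀ - z)).const_add z)
    simpa using this

end AUX

set_option maxHeartbeats 1000000 in
lemma kernel_unique (L vs lam γ ps τ : ℝ)
    (hL : 0 < L) (hvs : 0 < vs) (hτ : 0 < τ)
    (hlam : lam = γ * ps - vs) (hlampos : 0 < lam)
    (c : ℝ → ℝ) (hc : ∀ ξ : ℝ, c ξ = -(1 / τ) * Real.exp (-ξ / (τ * vs)))
    (K1 K2 : ℝ → ℝ → ℝ)
    (hsol : IsKernelSolIncoming L vs lam (γ * ps) τ c K1 K2) :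
    ∀ z ∈ lowerTriangle L,
      K1 z.1 z.2 = Real.exp (-z.2 / (τ * vs)) / (τ * (γ * ps)) ∧
      K2 z.1 z.2 = -(1 / (τ * (γ * ps))) := by
  obtain ⟨hK1d, hK2d, -, hPDE1, hPDE2, hBC1, hBC2⟩ := hsol
  have hγp : 0 < γ * ps := by nlinarith
  have hsum : lam + vs = γ * ps := by linarith
  have hP : (0:ℝ) < lam + vs := by linarith
  set A : ℝ := τ * (γ * ps) with hA
  have hA0 : A ≠ 0 := by positivity
  set W : ℝ × ℝ → ℝ := fun z => K1 z.1 z.2 - Real.exp (-z.2 / (τ * vs)) / A with hW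
  set V : ℝ × ℝ → ℝ := fun z => K2 z.1 z.2 + 1 / A with hV
  set ψ : ℝ → ℝ := fun t => V (t - L, -L) with hψ
  -- continuity
  have hEd : ContDiffOn ℝ 1
      (fun z : ℝ × ℝ => Real.exp (-z.2 / (τ * vs)) / A) (lowerTriangle L) :=
    (((Real.contDiff_exp.comp ((contDiff_snd.neg).div_const _)).div_const _)).contDiffOn
  have hWc : ContinuousOn W (lowerTriangle L) := (hK1d.sub hEd).continuousOn
  have hVc : ContinuousOn V (lowerTriangle L) := (hK2d.add contDiffOn_const).continuousOn
  -- derivative facts on the open triangle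
  have hTnhds : ∀ p : ℝ × ℝ, p ∈ lowerTriangleO L → lowerTriangle L ∈ nhds p := fun p hp =>
    Filter.mem_of_superset ((isOpen_lowerTriangleO L).mem_nhds hp) (lowerTriangleO_subset L)
  have hVder : ∀ p : ℝ × ℝ, p ∈ lowerTriangleO L →
      HasDerivAt (fun s : ℝ => V (p.1 + 1 * s, p.2 + 1 * s)) 0 0 := by
    intro p hp
    have hnh := hTnhds p hp
    have hmem : (p.1, p.2) ∈ lowerTriangle L := lowerTriangleO_subset L hp
    have h2 := hasDerivAt_dir hK2d (by rwa [Prod.mk.eta]) 1 1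
    have he2 := hPDE2 p.1 p.2 hmem
    have hval : 1 * deriv (fun u => K2 u p.2) p.1 + 1 * deriv (fun w => K2 p.1 w) p.2 = 0 := by
      rw [one_mul, one_mul]; exact he2
    rw [hval] at h2
    exact h2.add_const (1 / A)
  have hWder : ∀ p : ℝ × ℝ, p ∈ lowerTriangleO L →
      HasDerivAt (fun s : ℝ => W (p.1 + lam * s, p.2 + (-vs) * s)) (c p.2 * V p) 0 := by
    intro p hp
    have hnh := hTnhds p hp
    have hmem : (p.1, p.2) ∈ lowerTriangle L := lowerTriangleO_subset L hp
    have h1 := hasDerivAt_dir hK1d (by rwa [Prod.mk.eta]) lam (-vs)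
    have e1 := hPDE1 p.1 p.2 hmem
    have hv1 : lam * deriv (fun u => K1 u p.2) p.1 + (-vs) * deriv (fun w => K1 p.1 w) p.2
        = c p.2 * K2 p.1 p.2 := by rw [neg_mul, ← sub_eq_add_neg]; exact e1
    rw [hv1] at h1
    -- derivative of the explicit part along the characteristic
    have hEder : HasDerivAt
        (fun s : ℝ => Real.exp (-(p.2 + (-vs) * s) / (τ * vs)) / A) (c p.2 * (-(1 / A))) 0 := by
      have h0 : HasDerivAt (fun s : ℝ => -(p.2 + (-vs) * s) / (τ * vs)) (vs / (τ * vs)) 0 := by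
        have : HasDerivAt (fun s : ℝ => p.2 + (-vs) * s) (-vs) 0 := by
          simpa using ((hasDerivAt_id (0:ℝ)).const_mul (-vs)).const_add p.2
        simpa [neg_div, neg_neg] using (this.neg.div_const (τ * vs))
      have := (h0.exp.div_const A)
      have harg : Real.exp (-(p.2 + -vs * 0) / (τ * vs)) * (vs / (τ * vs)) / A
          = c p.2 * (-(1 / A)) := by
        rw [hc]
        have hτvs : τ * vs ≠ 0 := by positivity
        field_simp
        ring
      rw [harg] at this
      exact this
    have hsub := h1.sub hEder
    have hval2 : c p.2 * K2 p.1 p.2 - c p.2 * (-(1 / A)) = c p.2 * V p := by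
      simp only [hV]; ring
    rw [hval2] at hsub
    exact hsub
  -- transport of V along diagonals
  have hVrep : ∀ x ξ : ℝ, (x, ξ) ∈ lowerTriangleO L → V (x, ξ) = ψ (x - ξ) := by
    intro x ξ hp
    obtain ⟨h1, h2, h3⟩ := hp
    have h1' : -L < ξ := h1
    have h2' : ξ < x := h2
    have h3' : x < 0 := h3
    set a : ℝ := -(ξ + L) with ha_def
    have ha : a < 0 := by simp only [ha_def]; linarith
    set h : ℝ → ℝ := fun s => V (x + s, ξ + s) with hh
    have hcont : ContinuousOn h (Icc a 0) := by
      refine hVc.comp (Continuous.continuousOn (by fun_prop)) ?_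
      intro s hs
      have hs1 : -(ξ + L) ≤ s := hs.1
      have hs2 : s ≤ 0 := hs.2
      refine ⟨?_, ?_, ?_⟩
      · show -L ≤ ξ + s; linarith
      · show ξ + s ≤ x + s; linarith
      · show x + s ≤ 0; linarith
    have hderiv : ∀ s ∈ Ioo a 0, HasDerivWithinAt h 0 (Ioi s) s := by
      intro s hs
      have hs1 : -(ξ + L) < s := hs.1
      have hs2 : s < 0 := hs.2
      have hpU : ((x + s, ξ + s) : ℝ × ℝ) ∈ lowerTriangleO L := by
        refine ⟨?_, ?_, ?_⟩
        · show -L < ξ + s; linarith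
        · show ξ + s < x + s; linarith
        · show x + s < 0; linarith
      have hd := hVder _ hpU
      have hshift : HasDerivAt (fun σ => h (s + σ)) 0 0 := by
        simp only [hh]
        convert hd using 2 with σ
        ring_nf
      exact (hasDerivAt_shift hshift).hasDerivWithinAt
    have hFTC := intervalIntegral.integral_eq_sub_of_hasDeriv_right_of_le (le_of_lt ha)
      hcont hderiv (intervalIntegrable_const (c := (0:ℝ)))
    simp only [intervalIntegral.integral_zero] at hFTC
    have heq : h 0 = h a := by linarith [hFTC]
    have h0 : h 0 = V (x, ξ) := by simp [hh]
    have hae : h a = ψ (x - ξ) := by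
      show V (x + a, ξ + a) = V (x - ξ - L, -L)
      have harg : ((x + a, ξ + a) : ℝ × ℝ) = (x - ξ - L, -L) := by
        rw [Prod.mk.injEq]; simp only [ha_def]; constructor <;> ring
      rw [harg]
    rw [← h0, heq, hae]
  have hψc : ContinuousOn ψ (Icc 0 L) := by
    refine hVc.comp (Continuous.continuousOn (by fun_prop)) ?_
    intro t ht
    refine ⟨le_refl _, ?_, ?_⟩
    · show -L ≤ t - L; linarith [ht.1]
    · show t - L ≤ 0; linarith [ht.2]
  have hψ0 : ψ 0 = 0 := by
    have hm : (-L : ℝ) ∈ Icc (-L) (0:ℝ) := ⟨le_refl _, by linarith⟩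
    have hb2 := hBC2 (-L) hm
    have hb1 := hBC1 (-L) hm
    simp only [hψ, hV]
    rw [show ((0:ℝ) - L) = -L by ring, hb2, hb1, hc]
    have hE : Real.exp (-L / (τ * vs)) * Real.exp (- -L / (τ * vs)) = 1 := by
      rw [← Real.exp_add, show -L / (τ * vs) + - -L / (τ * vs) = 0 by ring, Real.exp_zero]
    rw [hA]
    linear_combination (-(1 / (τ * (γ * ps)))) * hE
  -- Volterra equation for ψ
  have hψeq : ∀ t ∈ Ioc (0:ℝ) L, ψ t = (τ * (lam + vs))⁻¹ * Real.exp (-t / (τ * (lam + vs))) *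
      ∫ u in (0:ℝ)..t, Real.exp (u / (τ * (lam + vs))) * ψ u := by
    intro t ht
    obtain ⟨ht0, htL⟩ := ht
    set P : ℝ := lam + vs with hPdef
    have hP0 : P ≠ 0 := ne_of_gt hP
    set y : ℝ := t - L with hy
    set s₀ : ℝ := -t / P with hs₀def
    have hs₀ : s₀ < 0 := div_neg_of_neg_of_pos (by linarith) hP
    set w : ℝ → ℝ := fun s => W (y + lam * s, -L + (-vs) * s) with hw
    set g : ℝ → ℝ := fun s => c (-L + (-vs) * s) * ψ (t + P * s) with hgdef
    have hwcont : ContinuousOn w (Icc s₀ 0) := by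
      refine hWc.comp (Continuous.continuousOn (by fun_prop)) ?_
      intro s hs
      have hs1 : -t / P ≤ s := hs.1
      have hs2 : s ≤ 0 := hs.2
      have hPs : -t ≤ s * P := (div_le_iff₀ hP).mp hs1
      rw [hPdef] at hPs
      refine ⟨?_, ?_, ?_⟩
      · show -L ≤ -L + -vs * s; nlinarith
      · show -L + -vs * s ≤ y + lam * s; rw [hy]; nlinarith
      · show y + lam * s ≤ 0; rw [hy]; nlinarith
    have hwderiv : ∀ s ∈ Ioo s₀ 0, HasDerivWithinAt w (g s) (Ioi s) s := by
      intro s hs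
      have hs1 : -t / P < s := hs.1
      have hs2 : s < 0 := hs.2
      have hPs : -t < s * P := (div_lt_iff₀ hP).mp hs1
      rw [hPdef] at hPs
      have hpU : ((y + lam * s, -L + (-vs) * s) : ℝ × ℝ) ∈ lowerTriangleO L := by
        refine ⟨?_, ?_, ?_⟩
        · show -L < -L + -vs * s; nlinarith
        · show -L + -vs * s < y + lam * s; rw [hy]; nlinarith
        · show y + lam * s < 0; rw [hy]; nlinarith
      have hd := hWder _ hpU
      have hVval : V (y + lam * s, -L + (-vs) * s) = ψ (t + P * s) := by
        rw [hVrep (y + lam * s) (-L + (-vs) * s) hpU]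
        congr 1
        rw [hy, hPdef]; ring
      rw [hVval] at hd
      have hshift : HasDerivAt (fun σ => w (s + σ)) (c (-L + (-vs) * s) * ψ (t + P * s)) 0 := by
        convert hd using 2 with σ
        simp only [hw]
        ring_nf
      exact (hasDerivAt_shift hshift).hasDerivWithinAt
    set C : ℝ := -(1/τ) * Real.exp (L / (τ * vs)) * Real.exp (-t / (τ * P)) with hC
    set G : ℝ → ℝ := fun u => Real.exp (u / (τ * P)) * ψ u with hG
    have hgeq : ∀ s : ℝ, g s = C * G (P * s + t) := by
      intro s
      simp only [hgdef, hC, hG]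
      rw [hc, show t + P * s = P * s + t by ring]
      have hexp : -(-L + -vs * s) / (τ * vs)
          = L / (τ * vs) + (-t / (τ * P) + (P * s + t) / (τ * P)) := by
        rw [hPdef]; field_simp; ring
      rw [hexp, Real.exp_add, Real.exp_add]; ring
    have hgcont : ContinuousOn g (Icc s₀ 0) := by
      have hGcont : ContinuousOn (fun s : ℝ => G (P * s + t)) (Icc s₀ 0) := by
        simp only [hG]
        apply ContinuousOn.mul (Continuous.continuousOn (by fun_prop))
        refine hψc.comp (Continuous.continuousOn (by fun_prop)) ?_
        intro s hs
        have hs1 : -t / P ≤ s := hs.1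
        have hs2 : s ≤ 0 := hs.2
        have hPs : -t ≤ s * P := (div_le_iff₀ hP).mp hs1
        constructor
        · show 0 ≤ P * s + t; nlinarith
        · show P * s + t ≤ L; rw [hPdef] at hPs ⊢; nlinarith
      have : ContinuousOn (fun s : ℝ => C * G (P * s + t)) (Icc s₀ 0) :=
        hGcont.const_smul C
      exact this.congr (fun s _ => hgeq s)
    have hgint : IntervalIntegrable g MeasureTheory.volume s₀ 0 := by
      apply ContinuousOn.intervalIntegrable
      rwa [uIcc_of_le hs₀.le]
    have hFTC := intervalIntegral.integral_eq_sub_of_hasDeriv_right_of_le hs₀.le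
      hwcont hwderiv hgint
    have hco : -L + (-vs) * s₀ = y + lam * s₀ := by
      rw [hs₀def, hy, hPdef]; field_simp; ring
    have hmem : y + lam * s₀ ∈ Icc (-L) (0:ℝ) := by
      have key2 : (lam + vs) * (y + lam * s₀ + L) = vs * t := by
        rw [hs₀def, hy, hPdef]; field_simp; ring
      have key3 : (lam + vs) * (y + lam * s₀) = vs * t - L * (lam + vs) := by
        rw [hs₀def, hy, hPdef]; field_simp; ring
      rw [Set.mem_Icc]
      refine ⟨?_, ?_⟩
      · nlinarith [key2, mul_nonneg hvs.le ht0.le, hP]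
      · nlinarith [key3, hP, mul_le_mul_of_nonneg_left htL hvs.le]
    have hws₀ : w s₀ = 0 := by
      show W (y + lam * s₀, -L + (-vs) * s₀) = 0
      rw [hco]
      have hb := hBC1 (y + lam * s₀) hmem
      show K1 (y + lam * s₀) (y + lam * s₀)
        - Real.exp (-(y + lam * s₀) / (τ * vs)) / A = 0
      rw [hb, hc, hA]
      field_simp
      simp
    have hyIcc : y ∈ Icc (-L) (0:ℝ) := ⟨by rw [hy]; linarith, by rw [hy]; linarith⟩
    have hbd : ψ t = -Real.exp (-L / (τ * vs)) * w 0 := by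
      have hw0 : w 0 = W (y, -L) := by simp only [hw]; norm_num
      rw [hw0]
      show K2 (t - L) (-L) + 1 / A
        = -Real.exp (-L / (τ * vs)) * (K1 y (-L) - Real.exp (-(-L) / (τ * vs)) / A)
      rw [show t - L = y from hy.symm, hBC2 y hyIcc]
      have hE : Real.exp (-L / (τ * vs)) * Real.exp (-(-L) / (τ * vs)) = 1 := by
        rw [← Real.exp_add, show -L / (τ * vs) + -(-L) / (τ * vs) = 0 by ring, Real.exp_zero]
      rw [hA]
      linear_combination (-(1 / (τ * (γ * ps)))) * hE
    have hwsum : w 0 = ∫ s in s₀..0, g s := by rw [hws₀] at hFTC; linarith [hFTC]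
    have hint1 : ∫ s in s₀..0, g s = C * ∫ s in s₀..0, G (P * s + t) := by
      rw [← intervalIntegral.integral_const_mul]
      exact intervalIntegral.integral_congr (fun s _ => hgeq s)
    have hint2 : ∫ s in s₀..0, G (P * s + t) = P⁻¹ • ∫ u in (P * s₀ + t)..(P * 0 + t), G u :=
      intervalIntegral.integral_comp_mul_add G hP0 t
    have hb1 : P * s₀ + t = 0 := by rw [hs₀def]; field_simp; ring
    have hb2 : P * 0 + t = t := by ring
    rw [hb1, hb2] at hint2
    rw [hbd, hwsum, hint1, hint2]
    have hE : Real.exp (-L / (τ * vs)) * Real.exp (L / (τ * vs)) = 1 := by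
      rw [← Real.exp_add, show -L / (τ * vs) + L / (τ * vs) = 0 by ring, Real.exp_zero]
    rw [hC, mul_inv]
    simp only [smul_eq_mul]
    linear_combination ((1/τ) * P⁻¹ * Real.exp (-t / (τ * P))
      * (∫ u in (0:ℝ)..t, G u)) * hE
  -- ψ vanishes
  have hψzero : ∀ t ∈ Icc (0:ℝ) L, ψ t = 0 := by
    set P : ℝ := lam + vs with hPdef
    set G : ℝ → ℝ := fun u => Real.exp (u / (τ * P)) * ψ u with hG
    set g : ℝ → ℝ := fun t => ∫ u in (0:ℝ)..t, G u with hg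
    have hGc : ContinuousOn G (Icc 0 L) := by
      exact (Continuous.continuousOn (by fun_prop)).mul hψc
    have hgc : ContinuousOn g (Icc 0 L) := by
      have hint : MeasureTheory.IntegrableOn G (uIcc (0:ℝ) L) MeasureTheory.volume := by
        rw [uIcc_of_le hL.le]
        exact hGc.integrableOn_compact isCompact_Icc
      have := intervalIntegral.continuousOn_primitive_interval hint
      rwa [uIcc_of_le hL.le] at this
    have hGca : ∀ u ∈ Ioo (0:ℝ) L, ContinuousAt G u := by
      intro u hu
      have hψa : ContinuousAt ψ u :=
        (hψc.continuousWithinAt ⟨hu.1.le, hu.2.le⟩).continuousAt (Icc_mem_nhds hu.1 hu.2)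
      exact (Continuous.continuousAt (by fun_prop)).mul hψa
    have hgder : ∀ u ∈ Ioo (0:ℝ) L, HasDerivAt g (G u) u := by
      intro u hu
      refine intervalIntegral.integral_hasDerivAt_right ?_ ?_ (hGca u hu)
      · apply ContinuousOn.intervalIntegrable
        apply hGc.mono
        rw [uIcc_of_le hu.1.le]
        exact Icc_subset_Icc le_rfl hu.2.le
      · exact ContinuousOn.stronglyMeasurableAtFilter isOpen_Ioo
          (fun v hv => (hGca v hv).continuousWithinAt) u hu
    set φ : ℝ → ℝ := fun t => Real.exp (-t / (τ * P)) * g t with hφ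
    have hφc : ContinuousOn φ (Icc 0 L) := (Continuous.continuousOn (by fun_prop)).mul hgc
    have hφder : ∀ u ∈ Ioo (0:ℝ) L, HasDerivWithinAt φ 0 (Ioi u) u := by
      intro u hu
      have h1 : HasDerivAt (fun t : ℝ => Real.exp (-t / (τ * P)))
          (Real.exp (-u / (τ * P)) * (-(1 / (τ * P)))) u := by
        have h0 : HasDerivAt (fun t : ℝ => -t / (τ * P)) (-(1 / (τ * P))) u := by
          simpa [neg_div] using ((hasDerivAt_id u).neg.div_const (τ * P))
        exact h0.exp
      have h2 := h1.mul (hgder u hu)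
      have hgu : g u = ∫ x in (0:ℝ)..u, G x := rfl
      have hψu := hψeq u ⟨hu.1, hu.2.le⟩
      rw [← hgu] at hψu
      have hval : Real.exp (-u / (τ * P)) * (-(1 / (τ * P))) * g u
          + Real.exp (-u / (τ * P)) * G u = 0 := by
        show Real.exp (-u / (τ * P)) * (-(1 / (τ * P))) * g u
            + Real.exp (-u / (τ * P)) * (Real.exp (u / (τ * P)) * ψ u) = 0
        rw [hψu]
        have hE : Real.exp (-u / (τ * P)) * Real.exp (u / (τ * P)) = 1 := by
          rw [← Real.exp_add, show -u / (τ * P) + u / (τ * P) = 0 by ring, Real.exp_zero]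
        linear_combination ((τ * P)⁻¹ * Real.exp (-u / (τ * P)) * g u) * hE
      rw [hval] at h2
      exact h2.hasDerivWithinAt
    have hφ0 : ∀ t ∈ Icc (0:ℝ) L, φ t = φ 0 := by
      intro t ht
      have hFTC := intervalIntegral.integral_eq_sub_of_hasDeriv_right_of_le ht.1
        (hφc.mono (Icc_subset_Icc le_rfl ht.2))
        (fun u hu => hφder u ⟨hu.1, lt_of_lt_of_le hu.2 ht.2⟩)
        (intervalIntegrable_const (c := (0:ℝ)))
      simp only [intervalIntegral.integral_zero] at hFTC
      linarith [hFTC]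
    intro t ht
    have hφzero : φ 0 = 0 := by
      have : g 0 = 0 := intervalIntegral.integral_same
      simp only [hφ]
      rw [this, mul_zero]
    have hgt : g t = 0 := by
      have h5 : Real.exp (-t / (τ * P)) * g t = 0 := by
        have := hφ0 t ht
        rw [hφzero] at this
        exact this
      rcases mul_eq_zero.mp h5 with h | h
      · exact absurd h (Real.exp_ne_zero _)
      · exact h
    rcases eq_or_lt_of_le ht.1 with h0 | h0
    · rw [← h0]; exact hψ0
    · have hgu : g t = ∫ x in (0:ℝ)..t, G x := rfl
      have hψt := hψeq t ⟨h0, ht.2⟩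
      rw [← hgu] at hψt
      rw [hψt, hgt, mul_zero]
  -- V vanishes on the open triangle
  have hVzero : ∀ p ∈ lowerTriangleO L, V p = 0 := by
    intro p hp
    obtain ⟨h1, h2, h3⟩ := hp
    have := hVrep p.1 p.2 ⟨h1, h2, h3⟩
    rw [Prod.mk.eta] at this
    rw [this]
    exact hψzero _ ⟨by linarith, by linarith⟩
  -- W vanishes on the open triangle
  have hWzero : ∀ p ∈ lowerTriangleO L, W p = 0 := by
    intro p hp
    obtain ⟨h1, h2, h3⟩ := hp
    have h1' : -L < p.2 := h1
    have h2' : p.2 < p.1 := h2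
    have h3' : p.1 < 0 := h3
    set s₀ : ℝ := (p.2 - p.1) / (lam + vs) with hs₀def
    have hs₀ : s₀ < 0 := div_neg_of_neg_of_pos (by linarith) hP
    set w : ℝ → ℝ := fun s => W (p.1 + lam * s, p.2 + (-vs) * s) with hw
    have hwcont : ContinuousOn w (Icc s₀ 0) := by
      refine hWc.comp (Continuous.continuousOn (by fun_prop)) ?_
      intro s hs
      have hs1 : (p.2 - p.1) / (lam + vs) ≤ s := hs.1
      have hs2 : s ≤ 0 := hs.2
      have hPs : p.2 - p.1 ≤ s * (lam + vs) := (div_le_iff₀ hP).mp hs1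
      refine ⟨?_, ?_, ?_⟩
      · show -L ≤ p.2 + -vs * s; nlinarith
      · show p.2 + -vs * s ≤ p.1 + lam * s; nlinarith
      · show p.1 + lam * s ≤ 0; nlinarith
    have hwderiv : ∀ s ∈ Ioo s₀ 0, HasDerivWithinAt w 0 (Ioi s) s := by
      intro s hs
      have hs1 : (p.2 - p.1) / (lam + vs) < s := hs.1
      have hs2 : s < 0 := hs.2
      have hPs : p.2 - p.1 < s * (lam + vs) := (div_lt_iff₀ hP).mp hs1
      have hpU : ((p.1 + lam * s, p.2 + (-vs) * s) : ℝ × ℝ) ∈ lowerTriangleO L := by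
        refine ⟨?_, ?_, ?_⟩
        · show -L < p.2 + -vs * s; nlinarith
        · show p.2 + -vs * s < p.1 + lam * s; nlinarith
        · show p.1 + lam * s < 0; nlinarith
      have hd := hWder _ hpU
      have hVv : V (p.1 + lam * s, p.2 + (-vs) * s) = 0 := hVzero _ hpU
      rw [hVv, mul_zero] at hd
      have hshift : HasDerivAt (fun σ => w (s + σ)) 0 0 := by
        convert hd using 2 with σ
        simp only [hw]
        ring_nf
      exact (hasDerivAt_shift hshift).hasDerivWithinAt
    have hFTC := intervalIntegral.integral_eq_sub_of_hasDeriv_right_of_le hs₀.le hwcont hwderiv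
      (intervalIntegrable_const (c := (0:ℝ)))
    simp only [intervalIntegral.integral_zero] at hFTC
    have hw0 : w 0 = W p := by
      simp only [hw]
      norm_num
    have hco : p.2 + (-vs) * s₀ = p.1 + lam * s₀ := by
      rw [hs₀def]; field_simp; ring
    have hmem : p.1 + lam * s₀ ∈ Icc (-L) (0:ℝ) := by
      have key2 : (lam + vs) * (p.1 + lam * s₀ + L) = lam * (p.2 + L) + vs * (p.1 + L) := by
        rw [hs₀def]; field_simp; ring
      have key3 : (lam + vs) * (p.1 + lam * s₀) = lam * p.2 + vs * p.1 := by
        rw [hs₀def]; field_simp; ring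
      rw [Set.mem_Icc]
      refine ⟨?_, ?_⟩
      · nlinarith [key2, hP]
      · nlinarith [key3, hP]
    have hws₀ : w s₀ = 0 := by
      show W (p.1 + lam * s₀, p.2 + (-vs) * s₀) = 0
      rw [hco]
      have hb := hBC1 (p.1 + lam * s₀) hmem
      show K1 (p.1 + lam * s₀) (p.1 + lam * s₀)
        - Real.exp (-(p.1 + lam * s₀) / (τ * vs)) / A = 0
      rw [hb, hc, hA]
      field_simp
      simp
    have hfin : W p = w s₀ := by rw [← hw0]; linarith [hFTC]
    rw [hfin, hws₀]
  -- conclude by density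
  intro z hz
  have hcl := mem_closure_lowerTriangleO hL hz
  have hW0 : W z = 0 := zero_on_closure (lowerTriangleO_subset L) hWc hWzero hz hcl
  have hV0 : V z = 0 := zero_on_closure (lowerTriangleO_subset L) hVc hVzero hz hcl
  constructor
  · have : K1 z.1 z.2 - Real.exp (-z.2 / (τ * vs)) / A = 0 := hW0
    linarith
  · have : K2 z.1 z.2 + 1 / A = 0 := hV0
    linarith

lemma kernel_exists (L vs lam γ ps τ : ℝ)
    (hL : 0 < L) (hvs : 0 < vs) (hτ : 0 < τ)
    (hlam : lam = γ * ps - vs) (hlampos : 0 < lam)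
    (c : ℝ → ℝ) (hc : ∀ ξ : ℝ, c ξ = -(1 / τ) * Real.exp (-ξ / (τ * vs))) :
    IsKernelSolIncoming L vs lam (γ * ps) τ c
      (fun _ ξ => Real.exp (-ξ / (τ * vs)) / (τ * (γ * ps)))
      (fun _ _ => -(1 / (τ * (γ * ps)))) := by
  have hγp : 0 < γ * ps := by nlinarith
  have hτγ : τ * (γ * ps) ≠ 0 := by positivity
  have hτvs : τ * vs ≠ 0 := by positivity
  refine ⟨?_, ?_, ?_, ?_, ?_, ?_, ?_⟩
  · exact (((Real.contDiff_exp.comp ((contDiff_snd.neg).div_const _)).div_const _)).contDiffOn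
  · exact contDiffOn_const
  · refine ⟨Real.exp (L / (τ * vs)) / (τ * (γ * ps)) + 1 / (τ * (γ * ps)), fun z hz => ?_⟩
    obtain ⟨h1, h2, h3⟩ := hz
    have he : Real.exp (-z.2 / (τ * vs)) ≤ Real.exp (L / (τ * vs)) := by
      apply Real.exp_le_exp.2
      apply div_le_div_of_nonneg_right ?_ (by positivity)
      · linarith
    constructor
    · rw [abs_of_pos (by positivity)]
      have : (0:ℝ) < 1 / (τ * (γ * ps)) := by positivity
      have h4 : Real.exp (-z.2 / (τ * vs)) / (τ * (γ * ps))
          ≤ Real.exp (L / (τ * vs)) / (τ * (γ * ps)) := by gcongr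
      linarith
    · rw [abs_neg, abs_of_pos (by positivity)]
      have : (0:ℝ) ≤ Real.exp (L / (τ * vs)) / (τ * (γ * ps)) := by positivity
      linarith
  · intro x ξ _
    have hd1 : deriv (fun _ : ℝ => Real.exp (-ξ / (τ * vs)) / (τ * (γ * ps))) x = 0 :=
      deriv_const _ _
    have hd2 : HasDerivAt (fun z : ℝ => Real.exp (-z / (τ * vs)) / (τ * (γ * ps)))
        (Real.exp (-ξ / (τ * vs)) * (-(1 / (τ * vs))) / (τ * (γ * ps))) ξ := by
      have h0 : HasDerivAt (fun z : ℝ => -z / (τ * vs)) (-(1 / (τ * vs))) ξ := by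
        simpa [neg_div] using ((hasDerivAt_id ξ).neg.div_const (τ * vs))
      exact (h0.exp.div_const _)
    rw [hd1, hd2.deriv, hc]
    field_simp
    ring
  · intro x ξ _; simp
  · intro x _; rw [hc]; field_simp
  · intro x _
    show -(1 / (τ * (γ * ps))) = -Real.exp (-L / (τ * vs)) * (Real.exp (-(-L) / (τ * vs)) / (τ * (γ * ps)))
    rw [neg_mul, mul_div_assoc', ← Real.exp_add]
    have : -L / (τ * vs) + -(-L) / (τ * vs) = 0 := by ring
    rw [this, Real.exp_zero]

/-- Well-posedness of the backstepping kernel equations on the incoming road: the Goursat-type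
kernel system on the triangle `T₂` admits a unique bounded continuously differentiable
solution pair. -/
theorem kernel_wellposed_incoming (L vs lam γ ps τ : ℝ)
    (hL : 0 < L) (hvs : 0 < vs) (hτ : 0 < τ)
    (hlam : lam = γ * ps - vs) (hlampos : 0 < lam)
    (c : ℝ → ℝ) (hc : ∀ ξ : ℝ, c ξ = -(1 / τ) * Real.exp (-ξ / (τ * vs))) :
    ∃ Kvw Kvv : ℝ → ℝ → ℝ,
      IsKernelSolIncoming L vs lam (γ * ps) τ c Kvw Kvv ∧
      ∀ Kvw' Kvv' : ℝ → ℝ → ℝ,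
        IsKernelSolIncoming L vs lam (γ * ps) τ c Kvw' Kvv' →
        ∀ z ∈ lowerTriangle L,
          Kvw' z.1 z.2 = Kvw z.1 z.2 ∧ Kvv' z.1 z.2 = Kvv z.1 z.2 := by
  refine ⟨fun _ ξ => Real.exp (-ξ / (τ * vs)) / (τ * (γ * ps)),
    fun _ _ => -(1 / (τ * (γ * ps))),
    kernel_exists L vs lam γ ps τ hL hvs hτ hlam hlampos c hc, ?_⟩
  intro Kvw' Kvv' hsol' z hz
  exact kernel_unique L vs lam γ ps τ hL hvs hτ hlam hlampos c hc Kvw' Kvv' hsol' z hz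
end

section
/- Let L > 0; for i = 1,2 let v_i⋆ > 0, λ_i > 0, τ_i > 0, 0 < r₂ ≤ r₁ < 1, and set E_i = exp(−L/(τ_i v_i⋆)), κ_i = L/v_i⋆ + L/λ_i, a = E₂(r₁−r₂)/((1−r₁)r₂) and b = E₁E₂. Assume a + b < 1. Let α₁, β₁ : [0,L]×[0,∞) → ℝ and α₂, β₂ : [−L,0]×[0,∞) → ℝ be continuously differentiable, bounded, and satisfy the target system ∂_t α_i + v_i⋆∂_x α_i = 0, ∂_t β_i − λ_i∂_x β_i = 0, β₁(L,t) = r₁E₁α₁(L,t), α₁(0,t) = α₂(0,t), α₂(−L,t) = (E₂/r₂)β₂(−L,t), β₂(0,t) = (r₂/r₁)β₁(0,t) + ((r₁−r₂)/(1−r₁))α₂(0,t). Then there exist constants C ≥ 0 and μ > 0 such that for all t ≥ 0, the sum of the L² norms ‖α₁(·,t)‖ + ‖β₁(·,t)‖ + ‖α₂(·,t)‖ + ‖β₂(·,t)‖ is at most C e^{−μ t}. -/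
lemma transport_const (F : ℝ → ℝ → ℝ) (A B c : ℝ) (hc : c ≠ 0)
    (hF : ContDiffOn ℝ 1 (fun z : ℝ × ℝ => F z.1 z.2) (Set.Icc A B ×ˢ Set.Ici 0))
    (hpde : ∀ x ∈ Set.Icc A B, ∀ t ∈ Set.Ici (0:ℝ),
      deriv (fun s => F x s) t + c * deriv (fun y => F y t) x = 0)
    {x₁ t₁ x₂ t₂ : ℝ} (hx₁ : x₁ ∈ Set.Icc A B) (hx₂ : x₂ ∈ Set.Icc A B)
    (ht₁ : 0 ≤ t₁) (ht₁₂ : t₁ ≤ t₂) (hchar : x₂ - x₁ = c * (t₂ - t₁)) :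
    F x₂ t₂ = F x₁ t₁ := by
  rcases eq_or_lt_of_le ht₁₂ with heq | hlt
  · subst heq
    have : x₂ = x₁ := by nlinarith [hchar]
    rw [this]
  · set g : ℝ → ℝ := fun t => F (x₁ + c * (t - t₁)) t with hg
    have hxm : ∀ t ∈ Set.Icc t₁ t₂, x₁ + c * (t - t₁) ∈ Set.Icc A B := by
      intro t ht
      obtain ⟨hta, htb⟩ := ht
      rcases le_or_gt 0 c with hcpos | hcneg
      · constructor
        · nlinarith [hx₁.1, mul_nonneg hcpos (sub_nonneg.mpr hta)]
        · nlinarith [hx₂.2, mul_le_mul_of_nonneg_left (sub_le_sub_right htb t₁) hcpos]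
      · constructor
        · nlinarith [hx₂.1, mul_le_mul_of_nonpos_left (sub_le_sub_right htb t₁) hcneg.le]
        · nlinarith [hx₁.2, mul_nonpos_of_nonpos_of_nonneg hcneg.le (sub_nonneg.mpr hta)]
    have hcont : ContinuousOn g (Set.Icc t₁ t₂) := by
      have hline : Continuous (fun t : ℝ => (x₁ + c * (t - t₁), t)) := by fun_prop
      have hmaps : Set.MapsTo (fun t : ℝ => (x₁ + c * (t - t₁), t)) (Set.Icc t₁ t₂)
          (Set.Icc A B ×ˢ Set.Ici 0) := fun t ht => ⟨hxm t ht, le_trans ht₁ ht.1⟩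
      exact ContinuousOn.comp hF.continuousOn hline.continuousOn hmaps
    have hderiv : ∀ t ∈ Set.Ioo t₁ t₂, HasDerivAt g 0 t := by
      intro t ht
      set x := x₁ + c * (t - t₁) with hx
      have hxI : x ∈ Set.Icc A B := hxm t (Set.mem_Icc.mpr ⟨ht.1.le, ht.2.le⟩)
      have htpos : 0 < t := lt_of_le_of_lt ht₁ ht.1
      have hxne1 : x ≠ x₁ := by
        intro h
        have h0 : c * (t - t₁) = 0 := by
          have := h ▸ hx
          nlinarith [hx, h]
        rcases mul_eq_zero.mp h0 with h' | h'
        · exact hc h'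
        · linarith [ht.1]
      have hxne2 : x ≠ x₂ := by
        intro h
        have hx2 : c * (t₂ - t) = 0 := by nlinarith [hchar, hx, h]
        rcases mul_eq_zero.mp hx2 with h' | h'
        · exact hc h'
        · linarith [ht.2]
      have hxbet : min x₁ x₂ ≤ x ∧ x ≤ max x₁ x₂ := by
        rcases le_or_gt 0 c with hcpos | hcneg
        · have h1 : x₁ ≤ x := by nlinarith [mul_nonneg hcpos (sub_nonneg.mpr ht.1.le)]
          have h2 : x ≤ x₂ := by
            have := mul_le_mul_of_nonneg_left (sub_le_sub_right ht.2.le t₁) hcpos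
            nlinarith [hchar]
          exact ⟨le_trans (min_le_left _ _) h1, le_trans h2 (le_max_right _ _)⟩
        · have h1 : x ≤ x₁ := by nlinarith [mul_nonpos_of_nonpos_of_nonneg hcneg.le (sub_nonneg.mpr ht.1.le)]
          have h2 : x₂ ≤ x := by
            have := mul_le_mul_of_nonpos_left (sub_le_sub_right ht.2.le t₁) hcneg.le
            nlinarith [hchar]
          exact ⟨le_trans (min_le_right _ _) h2, le_trans h1 (le_max_left _ _)⟩
      have hminx : min x₁ x₂ < x := by
        rcases lt_or_eq_of_le hxbet.1 with h | h
        · exact h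
        · exfalso; rcases min_choice x₁ x₂ with h' | h'
          · exact hxne1 (by rw [← h, h'])
          · exact hxne2 (by rw [← h, h'])
      have hmaxx : x < max x₁ x₂ := by
        rcases lt_or_eq_of_le hxbet.2 with h | h
        · exact h
        · exfalso; rcases max_choice x₁ x₂ with h' | h'
          · exact hxne1 (by rw [h, h'])
          · exact hxne2 (by rw [h, h'])
      have hxA : A < x := lt_of_le_of_lt (le_min hx₁.1 hx₂.1) hminx
      have hxB : x < B := lt_of_lt_of_le hmaxx (max_le hx₁.2 hx₂.2)
      -- joint differentiability at (x, t)
      have hnhds : Set.Icc A B ×ˢ Set.Ici 0 ∈ nhds ((x, t) : ℝ × ℝ) := by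
        have hmem : ((x, t) : ℝ × ℝ) ∈ Set.Ioo A B ×ˢ Set.Ioi 0 :=
          Set.mem_prod.mpr ⟨⟨hxA, hxB⟩, htpos⟩
        apply Filter.mem_of_superset ((isOpen_Ioo.prod isOpen_Ioi).mem_nhds hmem)
        exact Set.prod_mono Set.Ioo_subset_Icc_self Set.Ioi_subset_Ici_self
      have hdiff : DifferentiableAt ℝ (fun z : ℝ × ℝ => F z.1 z.2) (x, t) :=
        (hF.differentiableOn one_ne_zero).differentiableAt hnhds
      set D := fderiv ℝ (fun z : ℝ × ℝ => F z.1 z.2) (x, t) with hD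
      have hFD : HasFDerivAt (fun z : ℝ × ℝ => F z.1 z.2) D (x, t) := hdiff.hasFDerivAt
      -- partial derivatives
      have hpx : HasDerivAt (fun y => F y t) (D (1, 0)) x := by
        have hline : HasDerivAt (fun y : ℝ => ((y, t) : ℝ × ℝ)) ((1 : ℝ), (0 : ℝ)) x :=
          (hasDerivAt_id x).prodMk (hasDerivAt_const x t)
        exact hFD.comp_hasDerivAt x hline
      have hpt : HasDerivAt (fun s => F x s) (D (0, 1)) t := by
        have hline : HasDerivAt (fun s : ℝ => ((x, s) : ℝ × ℝ)) ((0 : ℝ), (1 : ℝ)) t :=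
          (hasDerivAt_const t x).prodMk (hasDerivAt_id t)
        exact hFD.comp_hasDerivAt t hline
      have hgd : HasDerivAt g (D (c, 1)) t := by
        have hline : HasDerivAt (fun s : ℝ => ((x₁ + c * (s - t₁), s) : ℝ × ℝ)) ((c : ℝ), (1 : ℝ)) t := by
          apply HasDerivAt.prodMk _ (hasDerivAt_id t)
          have : HasDerivAt (fun s : ℝ => x₁ + c * (s - t₁)) (c * 1) t :=
            ((hasDerivAt_id t).sub_const t₁).const_mul c |>.const_add x₁
          simpa using this
        have hFD' : HasFDerivAt (fun z : ℝ × ℝ => F z.1 z.2) D (x₁ + c * (t - t₁), t) := by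
          rw [← hx]; exact hFD
        have h2 := HasFDerivAt.comp_hasDerivAt (f := fun s : ℝ => (x₁ + c * (s - t₁), s)) t hFD' hline
        exact h2
      have hzero : D (c, 1) = 0 := by
        have hsplit : ((c : ℝ), (1 : ℝ)) = c • ((1 : ℝ), (0 : ℝ)) + ((0 : ℝ), (1 : ℝ)) := by
          simp [Prod.ext_iff]
        rw [hsplit, map_add, map_smul]
        have := hpde x hxI t (le_of_lt htpos)
        rw [hpt.deriv, hpx.deriv] at this
        linarith [this, smul_eq_mul (α := ℝ) (a := c) (b := D (1, 0))]
      exact hzero ▸ hgd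
    obtain ⟨ξ, hξ, hslope⟩ := exists_hasDerivAt_eq_slope g (fun _ => 0) hlt hcont hderiv
    have : g t₂ = g t₁ := by
      have h0 : ((0:ℝ)) = (g t₂ - g t₁) / (t₂ - t₁) := hslope
      rcases div_eq_zero_iff.mp h0.symm with h | h
      · linarith
      · exfalso; exact (sub_ne_zero.mpr hlt.ne') h
    have hx2 : x₁ + c * (t₂ - t₁) = x₂ := by linarith [hchar]
    calc F x₂ t₂ = g t₂ := by rw [hg]; simp [hx2]
      _ = g t₁ := this
      _ = F x₁ t₁ := by rw [hg]; simp

lemma sqrt_sq_integral_le (F : ℝ → ℝ) (A B c : ℝ) (hAB : A ≤ B)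
    (hF : ContinuousOn F (Set.Icc A B)) (hc : 0 ≤ c)
    (hb : ∀ x ∈ Set.Icc A B, |F x| ≤ c) :
    Real.sqrt (∫ x in A..B, F x ^ 2) ≤ Real.sqrt (B - A) * c := by
  have huIcc : Set.uIcc A B = Set.Icc A B := Set.uIcc_of_le hAB
  have hInt : IntervalIntegrable (fun x => F x ^ 2) MeasureTheory.volume A B := by
    apply ContinuousOn.intervalIntegrable
    rw [huIcc]
    exact hF.pow 2
  have hmono : (∫ x in A..B, F x ^ 2) ≤ ∫ _x in A..B, c ^ 2 := by
    apply intervalIntegral.integral_mono_on hAB hInt intervalIntegrable_const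
    intro x hx
    have h1 := hb x hx
    nlinarith [abs_nonneg (F x), sq_abs (F x)]
  have hval : (∫ _x in A..B, c ^ 2) = (B - A) * c ^ 2 := by
    rw [intervalIntegral.integral_const, smul_eq_mul]
  calc Real.sqrt (∫ x in A..B, F x ^ 2) ≤ Real.sqrt ((B - A) * c ^ 2) := by
        apply Real.sqrt_le_sqrt; rw [← hval]; exact hmono
    _ = Real.sqrt (B - A) * c := by
        rw [Real.sqrt_mul (by linarith), Real.sqrt_sq hc]

set_option maxHeartbeats 2000000 in
/-- Exponential `L²` stability of the decoupled target system of transport equations for the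
two-road network: under the stability condition `a + b < 1` with
`a = E₂(r₁−r₂)/((1−r₁)r₂)` and `b = E₁E₂`, every bounded continuously differentiable solution
of the target system decays exponentially to zero in the `L²` norm. -/
theorem target_system_exponential_stability
    (L v₁ v₂ lam₁ lam₂ r₁ r₂ τ₁ τ₂ : ℝ)
    (hL : 0 < L) (hv₁ : 0 < v₁) (hv₂ : 0 < v₂) (hlam₁ : 0 < lam₁) (hlam₂ : 0 < lam₂)
    (hr₂ : 0 < r₂) (hr₂₁ : r₂ ≤ r₁) (hr₁ : r₁ < 1) (hτ₁ : 0 < τ₁) (hτ₂ : 0 < τ₂)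
    (E₁ E₂ κ₁ κ₂ a b : ℝ)
    (hE₁ : E₁ = Real.exp (-L / (τ₁ * v₁))) (hE₂ : E₂ = Real.exp (-L / (τ₂ * v₂)))
    (hκ₁ : κ₁ = L / v₁ + L / lam₁) (hκ₂ : κ₂ = L / v₂ + L / lam₂)
    (ha : a = E₂ * (r₁ - r₂) / ((1 - r₁) * r₂)) (hb : b = E₁ * E₂)
    (hstab : a + b < 1)
    (α₁ β₁ α₂ β₂ : ℝ → ℝ → ℝ)
    (hα₁C1 : ContDiffOn ℝ 1 (fun z : ℝ × ℝ => α₁ z.1 z.2) (Set.Icc 0 L ×ˢ Set.Ici 0))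
    (hβ₁C1 : ContDiffOn ℝ 1 (fun z : ℝ × ℝ => β₁ z.1 z.2) (Set.Icc 0 L ×ˢ Set.Ici 0))
    (hα₂C1 : ContDiffOn ℝ 1 (fun z : ℝ × ℝ => α₂ z.1 z.2) (Set.Icc (-L) 0 ×ˢ Set.Ici 0))
    (hβ₂C1 : ContDiffOn ℝ 1 (fun z : ℝ × ℝ => β₂ z.1 z.2) (Set.Icc (-L) 0 ×ˢ Set.Ici 0))
    (hbdd : ∃ M : ℝ, (∀ x ∈ Set.Icc (0 : ℝ) L, ∀ t ∈ Set.Ici (0 : ℝ),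
        |α₁ x t| ≤ M ∧ |β₁ x t| ≤ M) ∧
      (∀ x ∈ Set.Icc (-L) (0 : ℝ), ∀ t ∈ Set.Ici (0 : ℝ),
        |α₂ x t| ≤ M ∧ |β₂ x t| ≤ M))
    (hpdeα₁ : ∀ x ∈ Set.Icc (0 : ℝ) L, ∀ t ∈ Set.Ici (0 : ℝ),
      deriv (fun s => α₁ x s) t + v₁ * deriv (fun y => α₁ y t) x = 0)
    (hpdeβ₁ : ∀ x ∈ Set.Icc (0 : ℝ) L, ∀ t ∈ Set.Ici (0 : ℝ),
      deriv (fun s => β₁ x s) t - lam₁ * deriv (fun y => β₁ y t) x = 0)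
    (hpdeα₂ : ∀ x ∈ Set.Icc (-L) (0 : ℝ), ∀ t ∈ Set.Ici (0 : ℝ),
      deriv (fun s => α₂ x s) t + v₂ * deriv (fun y => α₂ y t) x = 0)
    (hpdeβ₂ : ∀ x ∈ Set.Icc (-L) (0 : ℝ), ∀ t ∈ Set.Ici (0 : ℝ),
      deriv (fun s => β₂ x s) t - lam₂ * deriv (fun y => β₂ y t) x = 0)
    (hbc₁ : ∀ t ∈ Set.Ici (0 : ℝ), β₁ L t = r₁ * E₁ * α₁ L t)
    (hbc₂ : ∀ t ∈ Set.Ici (0 : ℝ), α₁ 0 t = α₂ 0 t)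
    (hbc₃ : ∀ t ∈ Set.Ici (0 : ℝ), α₂ (-L) t = E₂ / r₂ * β₂ (-L) t)
    (hbc₄ : ∀ t ∈ Set.Ici (0 : ℝ),
      β₂ 0 t = r₂ / r₁ * β₁ 0 t + (r₁ - r₂) / (1 - r₁) * α₂ 0 t) :
    ∃ C : ℝ, 0 ≤ C ∧ ∃ μ : ℝ, 0 < μ ∧ ∀ t : ℝ, 0 ≤ t →
      Real.sqrt (∫ x in (0:ℝ)..L, (α₁ x t) ^ 2)
        + Real.sqrt (∫ x in (0:ℝ)..L, (β₁ x t) ^ 2)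
        + Real.sqrt (∫ x in (-L)..(0:ℝ), (α₂ x t) ^ 2)
        + Real.sqrt (∫ x in (-L)..(0:ℝ), (β₂ x t) ^ 2)
      ≤ C * Real.exp (-μ * t) := by
  obtain ⟨M, hM1, hM2⟩ := hbdd
  -- basic positivity
  have hr₁pos : 0 < r₁ := lt_of_lt_of_le hr₂ hr₂₁
  have hE₁pos : 0 < E₁ := hE₁ ▸ Real.exp_pos _
  have hE₂pos : 0 < E₂ := hE₂ ▸ Real.exp_pos _
  have ha0 : 0 ≤ a := by
    rw [ha]
    apply div_nonneg (mul_nonneg hE₂pos.le (by linarith)) (mul_nonneg (by linarith) hr₂.le)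
  have hb0 : 0 < b := hb ▸ mul_pos hE₁pos hE₂pos
  have hθ0 : 0 < a + b := by linarith
  have hθ1 : a + b < 1 := hstab
  have hdLv₁ : 0 < L / v₁ := div_pos hL hv₁
  have hdLv₂ : 0 < L / v₂ := div_pos hL hv₂
  have hdLl₁ : 0 < L / lam₁ := div_pos hL hlam₁
  have hdLl₂ : 0 < L / lam₂ := div_pos hL hlam₂
  have hκ₁pos : 0 < κ₁ := by rw [hκ₁]; linarith
  have hκ₂pos : 0 < κ₂ := by rw [hκ₂]; linarith
  have hκpos : 0 < κ₁ + κ₂ := by linarith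
  have h0L : (0:ℝ) ∈ Set.Icc (0:ℝ) L := ⟨le_refl 0, hL.le⟩
  have hLL : L ∈ Set.Icc (0:ℝ) L := ⟨hL.le, le_refl L⟩
  have h0m : (0:ℝ) ∈ Set.Icc (-L) (0:ℝ) := ⟨by linarith, le_refl 0⟩
  have hLm : (-L) ∈ Set.Icc (-L) (0:ℝ) := ⟨le_refl _, by linarith⟩
  have hM0 : 0 ≤ M := le_trans (abs_nonneg _) (hM1 0 h0L 0 (Set.mem_Ici.mpr le_rfl)).1
  -- characteristics
  have h1 : ∀ x ∈ Set.Icc (0:ℝ) L, ∀ t : ℝ, x / v₁ ≤ t → α₁ x t = α₁ 0 (t - x / v₁) := by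
    intro x hx t hxt
    have hxv : 0 ≤ x / v₁ := div_nonneg hx.1 hv₁.le
    exact transport_const α₁ 0 L v₁ hv₁.ne' hα₁C1 hpdeα₁ h0L hx
      (by linarith) (by linarith) (by field_simp; ring)
  have h2 : ∀ x ∈ Set.Icc (0:ℝ) L, ∀ t : ℝ, (L - x) / lam₁ ≤ t →
      β₁ x t = β₁ L (t - (L - x) / lam₁) := by
    intro x hx t hxt
    have hxv : 0 ≤ (L - x) / lam₁ := div_nonneg (by linarith [hx.2]) hlam₁.le
    refine transport_const β₁ 0 L (-lam₁) (by simp [hlam₁.ne']) hβ₁C1 ?_ hLL hx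
      (by linarith) (by linarith) (by field_simp; try ring)
    intro y hy s hs
    have := hpdeβ₁ y hy s hs
    linarith
  have h3 : ∀ x ∈ Set.Icc (-L) (0:ℝ), ∀ t : ℝ, (x + L) / v₂ ≤ t →
      α₂ x t = α₂ (-L) (t - (x + L) / v₂) := by
    intro x hx t hxt
    have hxv : 0 ≤ (x + L) / v₂ := div_nonneg (by linarith [hx.1]) hv₂.le
    exact transport_const α₂ (-L) 0 v₂ hv₂.ne' hα₂C1 hpdeα₂ hLm hx
      (by linarith) (by linarith) (by field_simp; try ring)
  have h4 : ∀ x ∈ Set.Icc (-L) (0:ℝ), ∀ t : ℝ, -x / lam₂ ≤ t →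
      β₂ x t = β₂ 0 (t + x / lam₂) := by
    intro x hx t hxt
    have hneg : -x / lam₂ = -(x / lam₂) := by ring
    rw [hneg] at hxt
    refine transport_const β₂ (-L) 0 (-lam₂) (by simp [hlam₂.ne']) hβ₂C1 ?_ h0m hx
      (by linarith) ?_ (by field_simp; try ring)
    · intro y hy s hs
      have := hpdeβ₂ y hy s hs
      linarith
    · have : x / lam₂ ≤ 0 := div_nonpos_of_nonpos_of_nonneg hx.2 hlam₂.le
      linarith
  -- trace identities
  have hA2 : ∀ t : ℝ, κ₂ ≤ t → α₂ 0 t = E₂ / r₂ * β₂ 0 (t - κ₂) := by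
    intro t ht
    have hLv₂κ : L / v₂ ≤ κ₂ := by rw [hκ₂]; linarith
    have e1 := h3 0 h0m t (by rw [show ((0:ℝ) + L) = L from by ring]; linarith)
    rw [show ((0:ℝ) + L) = L from by ring] at e1
    have hs0 : (0:ℝ) ≤ t - L / v₂ := by linarith
    have e2 := hbc₃ (t - L / v₂) hs0
    have e3 := h4 (-L) hLm (t - L / v₂) (by
      rw [show -(-L) / lam₂ = L / lam₂ from by ring]
      rw [hκ₂] at ht
      linarith)
    rw [show t - L / v₂ + -L / lam₂ = t - κ₂ from by rw [hκ₂]; ring] at e3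
    rw [e1, e2, e3]
  have hB1 : ∀ t : ℝ, κ₁ ≤ t → β₁ 0 t = r₁ * E₁ * α₁ 0 (t - κ₁) := by
    intro t ht
    have hLl₁κ : L / lam₁ ≤ κ₁ := by rw [hκ₁]; linarith
    have e1 := h2 0 h0L t (by rw [show (L - (0:ℝ)) = L from by ring]; linarith)
    rw [show (L - (0:ℝ)) = L from by ring] at e1
    have hs0 : (0:ℝ) ≤ t - L / lam₁ := by linarith
    have e2 := hbc₁ (t - L / lam₁) hs0
    have e3 := h1 L hLL (t - L / lam₁) (by rw [hκ₁] at ht; linarith)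
    rw [show t - L / lam₁ - L / v₁ = t - κ₁ from by rw [hκ₁]; ring] at e3
    rw [e1, e2, e3]
  have hf : ∀ t : ℝ, κ₁ + κ₂ ≤ t →
      β₂ 0 t = a * β₂ 0 (t - κ₂) + b * β₂ 0 (t - (κ₁ + κ₂)) := by
    intro t ht
    have ht0 : (0:ℝ) ≤ t := by linarith
    have e0 := hbc₄ t ht0
    have eB := hB1 t (by linarith)
    have eA := hA2 t (by linarith)
    have eα : α₁ 0 (t - κ₁) = α₂ 0 (t - κ₁) := hbc₂ (t - κ₁) (by simp only [Set.mem_Ici]; linarith)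
    have eA2 := hA2 (t - κ₁) (by linarith)
    rw [show t - κ₁ - κ₂ = t - (κ₁ + κ₂) from by ring] at eA2
    rw [e0, eB, eα, eA2, eA, ha, hb]
    have h1r : (1:ℝ) - r₁ ≠ 0 := by linarith
    field_simp
    ring
  -- geometric decay of the junction trace
  have hgeo : ∀ n : ℕ, ∀ t : ℝ, (n : ℝ) * (κ₁ + κ₂) ≤ t → |β₂ 0 t| ≤ M * (a + b) ^ n := by
    intro n
    induction n with
    | zero =>
      intro t ht
      simp only [Nat.cast_zero, zero_mul] at ht
      simpa using (hM2 0 h0m t ht).2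
    | succ n ih =>
      intro t ht
      push_cast at ht
      have hn0 : (0:ℝ) ≤ (n : ℝ) := Nat.cast_nonneg n
      have hmn : 0 ≤ (n : ℝ) * (κ₁ + κ₂) := mul_nonneg hn0 hκpos.le
      have hft := hf t (by linarith)
      have ih1 := ih (t - κ₂) (by linarith)
      have ih2 := ih (t - (κ₁ + κ₂)) (by linarith)
      have hpw : 0 ≤ M * (a + b) ^ n := mul_nonneg hM0 (pow_nonneg hθ0.le n)
      calc |β₂ 0 t| = |a * β₂ 0 (t - κ₂) + b * β₂ 0 (t - (κ₁ + κ₂))| := by rw [hft]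
        _ ≤ |a * β₂ 0 (t - κ₂)| + |b * β₂ 0 (t - (κ₁ + κ₂))| := abs_add_le _ _
        _ = a * |β₂ 0 (t - κ₂)| + b * |β₂ 0 (t - (κ₁ + κ₂))| := by
            rw [abs_mul, abs_mul, abs_of_nonneg ha0, abs_of_nonneg hb0.le]
        _ ≤ a * (M * (a + b) ^ n) + b * (M * (a + b) ^ n) :=
            add_le_add (mul_le_mul_of_nonneg_left ih1 ha0) (mul_le_mul_of_nonneg_left ih2 hb0.le)
        _ = M * (a + b) ^ (n + 1) := by ring
  -- exponential decay of the junction trace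
  set μ : ℝ := -Real.log (a + b) / (κ₁ + κ₂) with hμdef
  have hlogneg : Real.log (a + b) < 0 := Real.log_neg hθ0 hθ1
  have hμpos : 0 < μ := div_pos (by linarith) hκpos
  have hfdecay : ∀ t : ℝ, 0 ≤ t → |β₂ 0 t| ≤ M / (a + b) * Real.exp (-μ * t) := by
    intro t ht
    set n := ⌊t / (κ₁ + κ₂)⌋₊ with hn
    have hfl : (n : ℝ) ≤ t / (κ₁ + κ₂) := Nat.floor_le (div_nonneg ht hκpos.le)
    have h1' : (n : ℝ) * (κ₁ + κ₂) ≤ t := by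
      calc (n : ℝ) * (κ₁ + κ₂) ≤ (t / (κ₁ + κ₂)) * (κ₁ + κ₂) :=
            mul_le_mul_of_nonneg_right hfl hκpos.le
        _ = t := by field_simp
    have h2' := hgeo n t h1'
    refine le_trans h2' ?_
    have hθn : (a + b) ^ n = Real.exp ((n : ℝ) * Real.log (a + b)) := by
      rw [← Real.exp_log hθ0, ← Real.exp_nat_mul, Real.exp_log hθ0]
    have hnlb : t / (κ₁ + κ₂) - 1 ≤ (n : ℝ) := by
      have := Nat.lt_floor_add_one (t / (κ₁ + κ₂))
      rw [← hn] at this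
      linarith
    have hexp : Real.exp ((n : ℝ) * Real.log (a + b)) ≤
        Real.exp ((t / (κ₁ + κ₂) - 1) * Real.log (a + b)) := by
      apply Real.exp_le_exp.mpr
      nlinarith
    calc M * (a + b) ^ n = M * Real.exp ((n : ℝ) * Real.log (a + b)) := by rw [hθn]
      _ ≤ M * Real.exp ((t / (κ₁ + κ₂) - 1) * Real.log (a + b)) :=
          mul_le_mul_of_nonneg_left hexp hM0
      _ = M / (a + b) * Real.exp (-μ * t) := by
          rw [show (t / (κ₁ + κ₂) - 1) * Real.log (a + b)
              = -μ * t + -(Real.log (a + b)) from by rw [hμdef]; field_simp; ring]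
          rw [Real.exp_add, Real.exp_neg, Real.exp_log hθ0]
          ring
  -- uniform constants
  set D : ℝ := (1 + E₂ / r₂) * (1 + r₁ * E₁) with hDdef
  have hEr : 0 < E₂ / r₂ := div_pos hE₂pos hr₂
  have hD1 : 1 ≤ D := by nlinarith [mul_pos hr₁pos hE₁pos]
  have hD0 : 0 ≤ D := by linarith
  have hDa : E₂ / r₂ ≤ D := by nlinarith [mul_pos hr₁pos hE₁pos]
  have hDb : r₁ * E₁ * (E₂ / r₂) ≤ D := by nlinarith [mul_pos hr₁pos hE₁pos]
  set C₁ : ℝ := M / (a + b) * D * Real.exp (μ * (κ₁ + κ₂)) + M * Real.exp (μ * (κ₁ + κ₂))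
    with hC₁def
  have hMθ0 : 0 ≤ M / (a + b) := div_nonneg hM0 hθ0.le
  have hC₁0 : 0 ≤ C₁ := by
    rw [hC₁def]
    exact add_nonneg (mul_nonneg (mul_nonneg hMθ0 hD0) (Real.exp_pos _).le)
      (mul_nonneg hM0 (Real.exp_pos _).le)
  -- the key estimate
  have hkey : ∀ co s t : ℝ, 0 ≤ co → co ≤ D → 0 ≤ s → t - (κ₁ + κ₂) ≤ s → s ≤ t →
      co * |β₂ 0 s| ≤ C₁ * Real.exp (-μ * t) := by
    intro co s t hco hcoD hs0 hsl hsu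
    have hb' := hfdecay s hs0
    have hexp : Real.exp (-μ * s) ≤ Real.exp (μ * (κ₁ + κ₂)) * Real.exp (-μ * t) := by
      rw [← Real.exp_add]
      apply Real.exp_le_exp.mpr
      nlinarith [hμpos.le]
    calc co * |β₂ 0 s| ≤ D * (M / (a + b) * Real.exp (-μ * s)) :=
          mul_le_mul hcoD hb' (abs_nonneg _) hD0
      _ ≤ D * (M / (a + b) * (Real.exp (μ * (κ₁ + κ₂)) * Real.exp (-μ * t))) := by
          apply mul_le_mul_of_nonneg_left (mul_le_mul_of_nonneg_left hexp hMθ0) hD0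
      _ = (M / (a + b) * D * Real.exp (μ * (κ₁ + κ₂))) * Real.exp (-μ * t) := by ring
      _ ≤ C₁ * Real.exp (-μ * t) := by
          apply mul_le_mul_of_nonneg_right _ (Real.exp_pos _).le
          rw [hC₁def]
          nlinarith [mul_nonneg hM0 (Real.exp_pos (μ * (κ₁ + κ₂))).le]
  -- small-time bound
  have hsmall : ∀ t : ℝ, 0 ≤ t → t ≤ κ₁ + κ₂ → M ≤ C₁ * Real.exp (-μ * t) := by
    intro t ht htκ
    have he : Real.exp (μ * (κ₁ + κ₂)) * Real.exp (-μ * t) = Real.exp (μ * (κ₁ + κ₂) + -μ * t) :=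
      (Real.exp_add _ _).symm
    have h1' : (1:ℝ) ≤ Real.exp (μ * (κ₁ + κ₂) + -μ * t) :=
      Real.one_le_exp (by nlinarith [hμpos.le])
    calc M = M * 1 := by ring
      _ ≤ M * (Real.exp (μ * (κ₁ + κ₂)) * Real.exp (-μ * t)) := by
          rw [he]; exact mul_le_mul_of_nonneg_left h1' hM0
      _ = (M * Real.exp (μ * (κ₁ + κ₂))) * Real.exp (-μ * t) := by ring
      _ ≤ C₁ * Real.exp (-μ * t) := by
          apply mul_le_mul_of_nonneg_right _ (Real.exp_pos _).le
          rw [hC₁def]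
          nlinarith [Real.exp_pos (μ * (κ₁ + κ₂)), mul_nonneg hMθ0 hD0]
  have hLv₁κ : L / v₁ ≤ κ₁ := by rw [hκ₁]; linarith
  have hLl₁κ : L / lam₁ ≤ κ₁ := by rw [hκ₁]; linarith
  have hLv₂κ : L / v₂ ≤ κ₂ := by rw [hκ₂]; linarith
  have hLl₂κ : L / lam₂ ≤ κ₂ := by rw [hκ₂]; linarith
  -- sup bounds for the four fields
  have supβ₂ : ∀ x ∈ Set.Icc (-L) (0:ℝ), ∀ t : ℝ, 0 ≤ t → |β₂ x t| ≤ C₁ * Real.exp (-μ * t) := by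
    intro x hx t ht
    have hxd0 : x / lam₂ ≤ 0 := div_nonpos_of_nonpos_of_nonneg hx.2 hlam₂.le
    have hxdl : -(L / lam₂) ≤ x / lam₂ := by
      rw [show -(L / lam₂) = (-L) / lam₂ from by ring]
      gcongr
      exact hx.1
    rcases le_or_gt (κ₁ + κ₂) t with hcase | hcase
    · rw [h4 x hx t (by rw [show -x / lam₂ = -(x / lam₂) from by ring]; linarith)]
      have := hkey 1 (t + x / lam₂) t zero_le_one hD1 (by linarith) (by linarith) (by linarith)
      simpa using this
    · exact le_trans (hM2 x hx t ht).2 (hsmall t ht hcase.le)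
  have supα₂ : ∀ x ∈ Set.Icc (-L) (0:ℝ), ∀ t : ℝ, 0 ≤ t → |α₂ x t| ≤ C₁ * Real.exp (-μ * t) := by
    intro x hx t ht
    have hxd0 : 0 ≤ (x + L) / v₂ := div_nonneg (by linarith [hx.1]) hv₂.le
    have hxdL : (x + L) / v₂ ≤ L / v₂ := by gcongr <;> linarith [hx.1, hx.2]
    rcases le_or_gt (κ₁ + κ₂) t with hcase | hcase
    · have e1 := h3 x hx t (by linarith)
      have e2 := hbc₃ (t - (x + L) / v₂) (by simp only [Set.mem_Ici]; linarith)
      have e3 := h4 (-L) hLm (t - (x + L) / v₂) (by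
        rw [show -(-L) / lam₂ = L / lam₂ from by ring]
        linarith)
      rw [e1, e2, e3, abs_mul, abs_of_pos hEr]
      exact hkey (E₂ / r₂) (t - (x + L) / v₂ + -L / lam₂) t hEr.le hDa
        (by rw [show -L / lam₂ = -(L / lam₂) from by ring]; linarith)
        (by rw [show -L / lam₂ = -(L / lam₂) from by ring]; linarith)
        (by rw [show -L / lam₂ = -(L / lam₂) from by ring]; linarith)
    · exact le_trans (hM2 x hx t ht).1 (hsmall t ht hcase.le)
  have supα₁ : ∀ x ∈ Set.Icc (0:ℝ) L, ∀ t : ℝ, 0 ≤ t → |α₁ x t| ≤ C₁ * Real.exp (-μ * t) := by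
    intro x hx t ht
    have hxd0 : 0 ≤ x / v₁ := div_nonneg hx.1 hv₁.le
    have hxdL : x / v₁ ≤ L / v₁ := by gcongr <;> linarith [hx.1, hx.2]
    rcases le_or_gt (κ₁ + κ₂) t with hcase | hcase
    · have e1 := h1 x hx t (by linarith)
      have e2 := hbc₂ (t - x / v₁) (by simp only [Set.mem_Ici]; linarith)
      have e3 := hA2 (t - x / v₁) (by linarith)
      rw [e1, e2, e3, abs_mul, abs_of_pos hEr]
      exact hkey (E₂ / r₂) (t - x / v₁ - κ₂) t hEr.le hDa
        (by linarith) (by linarith) (by linarith)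
    · exact le_trans (hM1 x hx t ht).1 (hsmall t ht hcase.le)
  have supβ₁ : ∀ x ∈ Set.Icc (0:ℝ) L, ∀ t : ℝ, 0 ≤ t → |β₁ x t| ≤ C₁ * Real.exp (-μ * t) := by
    intro x hx t ht
    have hxd0 : 0 ≤ (L - x) / lam₁ := div_nonneg (by linarith [hx.2]) hlam₁.le
    have hxdL : (L - x) / lam₁ ≤ L / lam₁ := by gcongr <;> linarith [hx.1, hx.2]
    rcases le_or_gt (κ₁ + κ₂) t with hcase | hcase
    · have e1 := h2 x hx t (by linarith)
      have e2 := hbc₁ (t - (L - x) / lam₁) (by simp only [Set.mem_Ici]; linarith)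
      have e3 := h1 L hLL (t - (L - x) / lam₁) (by linarith)
      have e4 := hbc₂ (t - (L - x) / lam₁ - L / v₁) (by
        simp only [Set.mem_Ici]
        rw [hκ₁] at hcase
        linarith)
      have e5 := hA2 (t - (L - x) / lam₁ - L / v₁) (by rw [hκ₁] at hcase; linarith)
      rw [e1, e2, e3, e4, e5]
      rw [show r₁ * E₁ * (E₂ / r₂ * β₂ 0 (t - (L - x) / lam₁ - L / v₁ - κ₂))
          = (r₁ * E₁ * (E₂ / r₂)) * β₂ 0 (t - (L - x) / lam₁ - L / v₁ - κ₂) from by ring]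
      rw [abs_mul, abs_of_pos (by positivity)]
      refine hkey (r₁ * E₁ * (E₂ / r₂)) (t - (L - x) / lam₁ - L / v₁ - κ₂) t
        (by positivity) hDb ?_ ?_ ?_
      · rw [hκ₁] at hcase; linarith
      · rw [hκ₁]; linarith
      · linarith
    · exact le_trans (hM1 x hx t ht).2 (hsmall t ht hcase.le)
  -- conclusion via L² bounds
  refine ⟨4 * Real.sqrt L * C₁, mul_nonneg (mul_nonneg (by norm_num) (Real.sqrt_nonneg L)) hC₁0, μ, hμpos, ?_⟩
  intro t ht
  have hcont₁ : ContinuousOn (fun x => α₁ x t) (Set.Icc (0:ℝ) L) := by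
    have hcomp : ContinuousOn ((fun z : ℝ × ℝ => α₁ z.1 z.2) ∘ (fun x : ℝ => (x, t))) (Set.Icc (0:ℝ) L) :=
      hα₁C1.continuousOn.comp (Continuous.continuousOn (by fun_prop)) (fun x hx => ⟨hx, ht⟩)
    exact hcomp
  have hcont₂ : ContinuousOn (fun x => β₁ x t) (Set.Icc (0:ℝ) L) := by
    have hcomp : ContinuousOn ((fun z : ℝ × ℝ => β₁ z.1 z.2) ∘ (fun x : ℝ => (x, t))) (Set.Icc (0:ℝ) L) :=
      hβ₁C1.continuousOn.comp (Continuous.continuousOn (by fun_prop)) (fun x hx => ⟨hx, ht⟩)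
    exact hcomp
  have hcont₃ : ContinuousOn (fun x => α₂ x t) (Set.Icc (-L) (0:ℝ)) := by
    have hcomp : ContinuousOn ((fun z : ℝ × ℝ => α₂ z.1 z.2) ∘ (fun x : ℝ => (x, t))) (Set.Icc (-L) (0:ℝ)) :=
      hα₂C1.continuousOn.comp (Continuous.continuousOn (by fun_prop)) (fun x hx => ⟨hx, ht⟩)
    exact hcomp
  have hcont₄ : ContinuousOn (fun x => β₂ x t) (Set.Icc (-L) (0:ℝ)) := by
    have hcomp : ContinuousOn ((fun z : ℝ × ℝ => β₂ z.1 z.2) ∘ (fun x : ℝ => (x, t))) (Set.Icc (-L) (0:ℝ)) :=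
      hβ₂C1.continuousOn.comp (Continuous.continuousOn (by fun_prop)) (fun x hx => ⟨hx, ht⟩)
    exact hcomp
  have hcE : 0 ≤ C₁ * Real.exp (-μ * t) := mul_nonneg hC₁0 (Real.exp_pos _).le
  have t1 := sqrt_sq_integral_le (fun x => α₁ x t) 0 L (C₁ * Real.exp (-μ * t)) hL.le hcont₁
    hcE (fun x hx => supα₁ x hx t ht)
  have t2 := sqrt_sq_integral_le (fun x => β₁ x t) 0 L (C₁ * Real.exp (-μ * t)) hL.le hcont₂
    hcE (fun x hx => supβ₁ x hx t ht)
  have t3 := sqrt_sq_integral_le (fun x => α₂ x t) (-L) 0 (C₁ * Real.exp (-μ * t))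
    (by linarith) hcont₃ hcE (fun x hx => supα₂ x hx t ht)
  have t4 := sqrt_sq_integral_le (fun x => β₂ x t) (-L) 0 (C₁ * Real.exp (-μ * t))
    (by linarith) hcont₄ hcE (fun x hx => supβ₂ x hx t ht)
  rw [show L - (0:ℝ) = L from by ring] at t1 t2
  rw [show (0:ℝ) - (-L) = L from by ring] at t3 t4
  have : Real.sqrt (∫ x in (0:ℝ)..L, (α₁ x t) ^ 2)
        + Real.sqrt (∫ x in (0:ℝ)..L, (β₁ x t) ^ 2)
        + Real.sqrt (∫ x in (-L)..(0:ℝ), (α₂ x t) ^ 2)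
        + Real.sqrt (∫ x in (-L)..(0:ℝ), (β₂ x t) ^ 2)
      ≤ 4 * (Real.sqrt L * (C₁ * Real.exp (-μ * t))) := by linarith
  calc Real.sqrt (∫ x in (0:ℝ)..L, (α₁ x t) ^ 2)
        + Real.sqrt (∫ x in (0:ℝ)..L, (β₁ x t) ^ 2)
        + Real.sqrt (∫ x in (-L)..(0:ℝ), (α₂ x t) ^ 2)
        + Real.sqrt (∫ x in (-L)..(0:ℝ), (β₂ x t) ^ 2)
      ≤ 4 * (Real.sqrt L * (C₁ * Real.exp (-μ * t))) := this
    _ = 4 * Real.sqrt L * C₁ * Real.exp (-μ * t) := by ring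
end
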